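/- arXiv:2002.09368 — 7 statements merged into one kernel-verified Lean document; each statement's English description precedes it below -/
import Mathlib

section
/- Let α(0),…,α(r) ∈ ℝⁿ be affinely independent points, let λ_0,…,λ_r > 0 with ∑_{j=0}^r λ_j = 1, and set β = ∑_{j=0}^r λ_j·α(j). Let c_0,…,c_r > 0 and c_β ∈ ℝ. Then the exponential sum f(x) = ∑_{j=0}^r c_j·exp(⟨x,α(j)⟩) + c_β·exp(⟨x,β⟩) is nonnegative for all x ∈ ℝⁿ if and only if −c_β ≤ ∏_{j=0}^r (c_j/λ_j)^{λ_j} (the right-hand side is called the circuit number Θ_f). -/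
open Finset

/-- Auxiliary: a linear functional can take arbitrary prescribed values on a
linearly independent family. -/
lemma exists_dual_of_linearIndependent' {E : Type*} [AddCommGroup E] [Module ℝ E]
    {m : ℕ} {v : Fin m → E} (hv : LinearIndependent ℝ v) (w : Fin m → ℝ) :
    ∃ φ : E →ₗ[ℝ] ℝ, ∀ j, φ (v j) = w j := by
  let B := Module.Basis.span hv
  let f : Submodule.span ℝ (Set.range v) →ₗ[ℝ] ℝ := B.constr ℝ w
  obtain ⟨q, hq⟩ := (Submodule.span ℝ (Set.range v)).exists_isCompl
  refine ⟨f.comp (Submodule.linearProjOfIsCompl _ q hq), fun j => ?_⟩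
  have hmem : v j ∈ Submodule.span ℝ (Set.range v) := Submodule.subset_span ⟨j, rfl⟩
  have hproj : (Submodule.linearProjOfIsCompl _ q hq) (v j) = ⟨v j, hmem⟩ :=
    Submodule.linearProjOfIsCompl_apply_left hq ⟨v j, hmem⟩
  have hBj : (⟨v j, hmem⟩ : Submodule.span ℝ (Set.range v)) = B j := by
    ext; simp [B, Module.Basis.span_apply]
  simp only [LinearMap.comp_apply, hproj, hBj]
  simp [f, Module.Basis.constr_basis]

/-- Auxiliary: affine independence gives linear independence of the lifted family. -/
lemma linearIndependent_lift_of_affineIndependent {n r : ℕ} {α : Fin (r + 1) → (Fin n → ℝ)}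
    (hα : AffineIndependent ℝ α) :
    LinearIndependent ℝ (fun j => ((α j, 1) : (Fin n → ℝ) × ℝ)) := by
  rw [linearIndependent_iff']
  intro s g hg j hj
  have h1 : ∑ i ∈ s, g i • α i = 0 := by
    have := congrArg Prod.fst hg
    simpa [Prod.fst_sum] using this
  have h2 : ∑ i ∈ s, g i = 0 := by
    have := congrArg Prod.snd hg
    simpa [Prod.snd_sum] using this
  exact affineIndependent_iff.mp hα s g h2 h1 j hj

/-- A nonnegative circuit criterion for exponential sums (circuit number). -/
theorem circuit_nonneg_iff_circuit_number {n r : ℕ}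
    (α : Fin (r + 1) → (Fin n → ℝ)) (hα : AffineIndependent ℝ α)
    (lam : Fin (r + 1) → ℝ) (hlam : ∀ j, 0 < lam j) (hlam1 : ∑ j, lam j = 1)
    (β : Fin n → ℝ) (hβ : β = ∑ j, lam j • α j)
    (c : Fin (r + 1) → ℝ) (hc : ∀ j, 0 < c j) (cβ : ℝ) :
    (∀ x : Fin n → ℝ,
        0 ≤ ∑ j, c j * Real.exp (∑ i, x i * α j i) + cβ * Real.exp (∑ i, x i * β i))
      ↔ -cβ ≤ ∏ j, (c j / lam j) ^ (lam j) := by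
  set Θ := ∏ j, (c j / lam j) ^ (lam j) with hΘdef
  have hΘpos : 0 < Θ :=
    Finset.prod_pos fun j _ => Real.rpow_pos_of_pos (div_pos (hc j) (hlam j)) _
  have hbx : ∀ x : Fin n → ℝ, ∑ i, x i * β i = ∑ j, lam j * ∑ i, x i * α j i := by
    intro x
    simp only [hβ, Finset.sum_apply, Pi.smul_apply, smul_eq_mul, Finset.mul_sum]
    rw [Finset.sum_comm]
    refine Finset.sum_congr rfl fun j _ => ?_
    refine Finset.sum_congr rfl fun i _ => by ring
  constructor
  · -- forward direction
    intro hf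
    obtain ⟨φ, hφ⟩ := exists_dual_of_linearIndependent'
      (linearIndependent_lift_of_affineIndependent hα) (fun j => Real.log (lam j / c j))
    set x : Fin n → ℝ := fun i => φ ((Pi.single i 1 : Fin n → ℝ), (0 : ℝ)) with hxdef
    set t : ℝ := φ ((0 : Fin n → ℝ), (1 : ℝ)) with htdef
    have hxα : ∀ j, ∑ i, x i * α j i = Real.log (lam j / c j) - t := by
      intro j
      have hdecomp : ((α j, 1) : (Fin n → ℝ) × ℝ)
          = (∑ i, (α j i) • ((Pi.single i 1 : Fin n → ℝ), (0 : ℝ)))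
            + ((0 : Fin n → ℝ), (1 : ℝ)) := by
        refine Prod.ext ?_ ?_
        · simp only [Prod.fst_add, Prod.fst_sum, Prod.smul_fst]
          ext k
          simp [Finset.sum_apply, Pi.single_apply]
        · simp [Prod.snd_sum]
      have := hφ j
      rw [hdecomp, map_add, map_sum] at this
      simp only [map_smul, smul_eq_mul, ← hxdef, ← htdef] at this
      have heq : ∑ i, α j i * x i = Real.log (lam j / c j) - t := by linarith
      rw [← heq]
      exact Finset.sum_congr rfl fun i _ => mul_comm _ _
    have hE := hf x
    have hsum1 : ∑ j, c j * Real.exp (∑ i, x i * α j i) = Real.exp (-t) := by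
      rw [show Real.exp (-t) = (∑ j, lam j) * Real.exp (-t) from by rw [hlam1, one_mul],
        Finset.sum_mul]
      refine Finset.sum_congr rfl fun j _ => ?_
      rw [hxα j, sub_eq_add_neg, Real.exp_add, Real.exp_log (div_pos (hlam j) (hc j)),
        show c j * (lam j / c j * Real.exp (-t)) = lam j / c j * c j * Real.exp (-t) from by ring,
        div_mul_cancel₀ _ (hc j).ne']
    have hsum2 : ∑ i, x i * β i = ∑ j, lam j * Real.log (lam j / c j) - t := by
      rw [hbx x]
      rw [show ∑ j, lam j * Real.log (lam j / c j) - t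
          = ∑ j, (lam j * Real.log (lam j / c j) - lam j * t) from by
        rw [Finset.sum_sub_distrib, ← Finset.sum_mul, hlam1, one_mul]]
      refine Finset.sum_congr rfl fun j _ => ?_
      rw [hxα j]; ring
    have hexpβ : Real.exp (∑ i, x i * β i) = Θ⁻¹ * Real.exp (-t) := by
      rw [hsum2, sub_eq_add_neg, Real.exp_add]
      congr 1
      rw [Real.exp_sum]
      rw [hΘdef, ← Finset.prod_inv_distrib]
      refine Finset.prod_congr rfl fun j _ => ?_
      rw [← Real.inv_rpow (div_pos (hc j) (hlam j)).le, inv_div, mul_comm,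
        Real.exp_mul, Real.exp_log (div_pos (hlam j) (hc j))]
    rw [hsum1, hexpβ] at hE
    have hEpos : (0:ℝ) < Real.exp (-t) := Real.exp_pos _
    have h1 : 0 ≤ Θ * (Real.exp (-t) + cβ * (Θ⁻¹ * Real.exp (-t))) := mul_nonneg hΘpos.le hE
    have h2 : Θ * (Real.exp (-t) + cβ * (Θ⁻¹ * Real.exp (-t))) = (Θ + cβ) * Real.exp (-t) := by
      field_simp
    by_contra hcon
    push_neg at hcon
    nlinarith
  · -- backward direction
    intro hΘ x
    have hAM := Real.geom_mean_le_arith_mean_weighted Finset.univ lam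
      (fun j => (c j / lam j) * Real.exp (∑ i, x i * α j i))
      (fun j _ => (hlam j).le) hlam1
      (fun j _ => mul_nonneg (div_nonneg (hc j).le (hlam j).le) (Real.exp_pos _).le)
    have hR : ∑ j, lam j * ((c j / lam j) * Real.exp (∑ i, x i * α j i))
        = ∑ j, c j * Real.exp (∑ i, x i * α j i) := by
      refine Finset.sum_congr rfl fun j _ => ?_
      rw [show lam j * ((c j / lam j) * Real.exp (∑ i, x i * α j i))
          = (c j / lam j * lam j) * Real.exp (∑ i, x i * α j i) from by ring,
        div_mul_cancel₀ _ (hlam j).ne']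
    have hL : ∏ j, ((c j / lam j) * Real.exp (∑ i, x i * α j i)) ^ (lam j)
        = Θ * Real.exp (∑ i, x i * β i) := by
      rw [show (∏ j, ((c j / lam j) * Real.exp (∑ i, x i * α j i)) ^ (lam j))
          = ∏ j, ((c j / lam j) ^ (lam j)
            * (Real.exp (∑ i, x i * α j i)) ^ (lam j)) from
        Finset.prod_congr rfl fun j _ =>
          Real.mul_rpow (div_pos (hc j) (hlam j)).le (Real.exp_pos _).le,
        Finset.prod_mul_distrib, hΘdef]
      congr 1
      rw [hbx x, Real.exp_sum]
      refine Finset.prod_congr rfl fun j _ => ?_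
      rw [mul_comm (lam j), Real.exp_mul]
    rw [hR, hL] at hAM
    have hEpos : (0:ℝ) < Real.exp (∑ i, x i * β i) := Real.exp_pos _
    nlinarith [mul_nonneg (by linarith : (0:ℝ) ≤ Θ + cβ) hEpos.le]
end

section
/- Let A' ⊆ ℝⁿ be a finite set, let c_α > 0 for all α ∈ A', let β ∈ ℝⁿ with β ∉ A' and c_β < 0. If the exponential sum f(x) = ∑_{α∈A'} c_α·exp(⟨x,α⟩) + c_β·exp(⟨x,β⟩) is nonnegative for all x ∈ ℝⁿ, then β lies in the convex hull of A'. -/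
open Finset

/-- If an AGE exponential sum (with positive coefficients on `A'` and a single
negative coefficient on `β ∉ A'`) is nonnegative on `ℝⁿ`, then `β` lies in the convex hull
of `A'`. -/
theorem age_nonneg_beta_mem_convexHull {n : ℕ}
    (A' : Finset (Fin n → ℝ)) (c : (Fin n → ℝ) → ℝ) (hc : ∀ α ∈ A', 0 < c α)
    (β : Fin n → ℝ) (hβ : β ∉ A') (cβ : ℝ) (hcβ : cβ < 0)
    (hnn : ∀ x : Fin n → ℝ,
      0 ≤ (∑ α ∈ A', c α * Real.exp (∑ i, x i * α i)) + cβ * Real.exp (∑ i, x i * β i)) :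
    β ∈ convexHull ℝ (A' : Set (Fin n → ℝ)) := by
  rcases A'.eq_empty_or_nonempty with rfl | hA
  · exfalso
    have h := hnn 0
    simp at h
    nlinarith [Real.exp_pos (∑ i : Fin n, (0:ℝ) * β i), h]
  by_contra hmem
  obtain ⟨f, u, hfs, hfβ⟩ := geometric_hahn_banach_closed_point
    (convex_convexHull ℝ _) (A'.finite_toSet.isClosed_convexHull ℝ) hmem
  set S := ∑ α ∈ A', c α with hS
  have hSpos : 0 < S := Finset.sum_pos (fun α hα => hc α hα) hA
  set t : ℝ := max 1 ((Real.log (-cβ / S) - 1) / (u - f β)) with ht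
  have ht1 : (1:ℝ) ≤ t := le_max_left _ _
  have htpos : (0:ℝ) < t := lt_of_lt_of_le one_pos ht1
  have huβ : u - f β < 0 := sub_neg.mpr hfβ
  have ht2 : t * (u - f β) < Real.log (-cβ / S) := by
    have h1 : (Real.log (-cβ / S) - 1) / (u - f β) ≤ t := le_max_right _ _
    have h2 := (div_le_iff_of_neg huβ).mp h1
    linarith
  have hcS : 0 < -cβ / S := div_pos (neg_pos.mpr hcβ) hSpos
  have hexp : Real.exp (t * (u - f β)) < -cβ / S := by
    calc Real.exp (t * (u - f β)) < Real.exp (Real.log (-cβ / S)) :=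
          Real.exp_lt_exp.mpr ht2
      _ = -cβ / S := Real.exp_log hcS
  have key : ∀ y : Fin n → ℝ,
      (∑ i, (t * f (fun j => if i = j then (1:ℝ) else 0)) * y i) = t * f y := by
    intro y
    conv_rhs => rw [pi_eq_sum_univ y]
    rw [map_sum, Finset.mul_sum]
    apply Finset.sum_congr rfl
    intro i _
    rw [map_smul]
    simp [mul_comm]
    ring
  have h := hnn (fun i => t * f (fun j => if i = j then (1:ℝ) else 0))
  simp only [key] at h
  have hbound : ∑ α ∈ A', c α * Real.exp (t * f α) ≤ S * Real.exp (t * u) := by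
    rw [hS, Finset.sum_mul]
    apply Finset.sum_le_sum
    intro α hα
    have hfα : f α < u := hfs α (subset_convexHull ℝ _ hα)
    have hle : t * f α ≤ t * u := by nlinarith
    exact mul_le_mul_of_nonneg_left (Real.exp_le_exp.mpr hle) (hc α hα).le
  have hE : Real.exp (t * u) = Real.exp (t * (u - f β)) * Real.exp (t * f β) := by
    rw [← Real.exp_add]; ring_nf
  have h2 : Real.exp (t * (u - f β)) * S < -cβ := (lt_div_iff₀ hSpos).mp hexp
  have hfin : S * Real.exp (t * u) < -cβ * Real.exp (t * f β) := by
    rw [hE]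
    nlinarith [Real.exp_pos (t * f β)]
  linarith
end

section
/- Let A ⊆ ℝⁿ be a finite set and v : A → ℝ a coefficient vector such that the exponential sum f_v(x) = ∑_{γ∈A} v_γ·exp(⟨x,γ⟩) is nonnegative for all x ∈ ℝⁿ. If α₀ ∈ A is an extreme point of the convex hull of A, then v_{α₀} ≥ 0. -/
open Finset

/-- If an exponential sum supported on a finite set `A` is nonnegative on `ℝⁿ`,
then the coefficient of every extreme point of `conv(A)` is nonnegative. -/
theorem coeff_nonneg_of_extremePoint {n : ℕ}
    (A : Finset (Fin n → ℝ)) (v : (Fin n → ℝ) → ℝ)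
    (hnn : ∀ x : Fin n → ℝ, 0 ≤ ∑ γ ∈ A, v γ * Real.exp (∑ i, x i * γ i))
    (α₀ : Fin n → ℝ) (hα₀A : α₀ ∈ A)
    (hext : α₀ ∈ Set.extremePoints ℝ (convexHull ℝ (A : Set (Fin n → ℝ)))) :
    0 ≤ v α₀ := by
  classical
  -- α₀ is not in the convex hull of the rest of A
  have h1 : α₀ ∉ convexHull ℝ ((A : Set (Fin n → ℝ)) \ {α₀}) := by
    rw [(convex_convexHull ℝ _).mem_extremePoints_iff_mem_diff_convexHull_diff] at hext
    intro hmem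
    exact hext.2 (convexHull_mono (Set.diff_subset_diff_left (subset_convexHull ℝ _)) hmem)
  -- strictly separate
  obtain ⟨f, u, hfu, huα⟩ := geometric_hahn_banach_closed_point
    (convex_convexHull ℝ _) ((Set.Finite.isCompact_convexHull (𝕜 := ℝ) (A.finite_toSet.subset Set.diff_subset)).isClosed) h1
  have hsep : ∀ γ ∈ A, γ ≠ α₀ → f γ < f α₀ := by
    intro γ hγ hne
    exact lt_trans (hfu _ (subset_convexHull ℝ _ ⟨hγ, hne⟩)) huα
  -- express f via coordinates
  have hf : ∀ y : Fin n → ℝ, f y = ∑ i, y i * f (Pi.single i 1) := by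
    intro y
    conv_lhs => rw [pi_eq_sum_univ y]
    rw [map_sum]
    refine Finset.sum_congr rfl fun i _ => ?_
    rw [map_smul, smul_eq_mul]
    congr 2
    ext j
    simp [Pi.single_apply, eq_comm]
  set F : ℝ → ℝ := fun t => ∑ γ ∈ A, v γ * Real.exp (t * (f γ - f α₀)) with hF
  have hFnn : ∀ t : ℝ, 0 ≤ F t := by
    intro t
    have := hnn (t • fun i => f (Pi.single i 1))
    have key : ∀ γ ∈ A, v γ * Real.exp (t * (f γ - f α₀))
        = Real.exp (-(t * f α₀)) * (v γ * Real.exp (∑ i, (t • fun i => f (Pi.single i 1)) i * γ i)) := by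
      intro γ _
      have : (∑ i, (t • fun i => f (Pi.single i 1)) i * γ i) = t * f γ := by
        rw [hf γ, Finset.mul_sum]
        refine Finset.sum_congr rfl fun i _ => ?_
        simp [smul_eq_mul]; ring
      rw [this, show t * (f γ - f α₀) = -(t * f α₀) + t * f γ by ring, Real.exp_add]
      ring
    rw [show F t = ∑ γ ∈ A, v γ * Real.exp (t * (f γ - f α₀)) from rfl,
      Finset.sum_congr rfl key, ← Finset.mul_sum]
    positivity
  have hFt : Filter.Tendsto F Filter.atTop (nhds (v α₀)) := by
    have hdecomp : ∀ t, F t = v α₀ + ∑ γ ∈ A.erase α₀, v γ * Real.exp (t * (f γ - f α₀)) := by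
      intro t
      rw [show F t = ∑ γ ∈ A, v γ * Real.exp (t * (f γ - f α₀)) from rfl,
        ← Finset.add_sum_erase _ _ hα₀A]
      simp
    simp only [funext hdecomp]
    have : Filter.Tendsto (fun t => ∑ γ ∈ A.erase α₀, v γ * Real.exp (t * (f γ - f α₀)))
        Filter.atTop (nhds 0) := by
      rw [show (0 : ℝ) = ∑ γ ∈ A.erase α₀, (0:ℝ) by simp]
      refine tendsto_finset_sum _ fun γ hγ => ?_
      rw [show (0:ℝ) = v γ * 0 by ring]
      refine Filter.Tendsto.const_mul _ ?_
      refine Real.tendsto_exp_atBot.comp ?_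
      have hneg : f γ - f α₀ < 0 := sub_neg.2 (hsep γ (Finset.mem_of_mem_erase hγ) (Finset.ne_of_mem_erase hγ))
      exact Filter.tendsto_id.atTop_mul_const_of_neg hneg
    have := Filter.Tendsto.const_add (v α₀) this
    simpa using this
  exact le_of_tendsto_of_tendsto' tendsto_const_nhds hFt (fun t => hFnn t)
end

section
/- Let A⁺, A⁻ ⊆ ℝⁿ be disjoint finite sets with A⁺ ≠ ∅ and A⁻ ≠ ∅, set A = A⁺ ∪ A⁻, and let c ∈ C_{(A⁺,A⁻)}. Then there exist vectors c^{(β)} : A → ℝ indexed by β ∈ A⁻ such that (1) c = ∑_{β∈A⁻} c^{(β)}; (2) for every β ∈ A⁻ the exponential sum f_{c^{(β)}} is nonnegative on ℝⁿ and c^{(β)}_α ≥ 0 for all α ∈ A⁺; and (3) c^{(β)}_γ = 0 for all γ ∈ A⁻ with γ ≠ β. -/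
open Finset

/-- The exponential sum with support `A` and coefficient vector `v`. -/
noncomputable def expSum {n : ℕ} (A : Finset (Fin n → ℝ)) (v : (Fin n → ℝ) → ℝ)
    (x : Fin n → ℝ) : ℝ :=
  ∑ γ ∈ A, v γ * Real.exp (∑ i, x i * γ i)

/-- The signed SONC (= SAGE) cone `C_{(A⁺,A⁻)}`: coefficient vectors with the prescribed
sign pattern that are finite sums of vectors with at most one negative entry, each inducing
a nonnegative exponential sum. -/
def InSAGE {n : ℕ} (Ap An : Finset (Fin n → ℝ)) (c : (Fin n → ℝ) → ℝ) : Prop :=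
  (∀ α ∈ Ap, 0 ≤ c α) ∧ (∀ β ∈ An, c β ≤ 0) ∧
  ∃ (m : ℕ) (d : Fin m → (Fin n → ℝ) → ℝ),
    (∀ γ ∈ Ap ∪ An, c γ = ∑ i, d i γ) ∧
    (∀ i, ∀ γ₁ ∈ Ap ∪ An, ∀ γ₂ ∈ Ap ∪ An, d i γ₁ < 0 → d i γ₂ < 0 → γ₁ = γ₂) ∧
    (∀ i, ∀ x : Fin n → ℝ, 0 ≤ expSum (Ap ∪ An) (d i) x)

namespace SageAux

variable {n : ℕ}

/-- An AGE-type summand that is nonnegative, has at most one negative entry on `A`,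
and respects the sign patterns `Sp` (nonneg) and `Sn` (nonpos). -/
def Good (A Sp Sn : Finset (Fin n → ℝ)) (f : (Fin n → ℝ) → ℝ) : Prop :=
  (∀ x, 0 ≤ expSum A f x) ∧
  (∀ γ₁ ∈ A, ∀ γ₂ ∈ A, f γ₁ < 0 → f γ₂ < 0 → γ₁ = γ₂) ∧
  (∀ q ∈ Sp, 0 ≤ f q) ∧ (∀ q ∈ Sn, f q ≤ 0)

lemma expSum_smul (A : Finset (Fin n → ℝ)) (s : ℝ) (f : (Fin n → ℝ) → ℝ) (x : Fin n → ℝ) :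
    expSum A (fun γ => s * f γ) x = s * expSum A f x := by
  simp [expSum, Finset.mul_sum, mul_assoc]

lemma expSum_add (A : Finset (Fin n → ℝ)) (f g : (Fin n → ℝ) → ℝ) (x : Fin n → ℝ) :
    expSum A (fun γ => f γ + g γ) x = expSum A f x + expSum A g x := by
  simp [expSum, add_mul, Finset.sum_add_distrib]

lemma expSum_sum {ι : Type*} (s : Finset ι) (A : Finset (Fin n → ℝ))
    (v : ι → (Fin n → ℝ) → ℝ) (x : Fin n → ℝ) :
    expSum A (fun γ => ∑ i ∈ s, v i γ) x = ∑ i ∈ s, expSum A (v i) x := by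
  simp only [expSum, Finset.sum_mul]
  rw [Finset.sum_comm]

lemma Good.smul {A Sp Sn : Finset (Fin n → ℝ)} {f : (Fin n → ℝ) → ℝ}
    (hf : Good A Sp Sn f) {s : ℝ} (hs : 0 ≤ s) :
    Good A Sp Sn (fun γ => s * f γ) := by
  obtain ⟨h1, h2, h3, h4⟩ := hf
  have key : ∀ γ, s * f γ < 0 → f γ < 0 := by
    intro γ h
    by_contra hcon
    push_neg at hcon
    nlinarith [mul_nonneg hs hcon]
  refine ⟨fun x => ?_, ?_, fun q hq => ?_, fun q hq => ?_⟩
  · rw [expSum_smul]; exact mul_nonneg hs (h1 x)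
  · intro γ₁ hγ₁ γ₂ hγ₂ hn1 hn2
    exact h2 γ₁ hγ₁ γ₂ hγ₂ (key _ hn1) (key _ hn2)
  · exact mul_nonneg hs (h3 q hq)
  · show s * f q ≤ 0
    nlinarith [mul_nonneg hs (neg_nonneg.2 (h4 q hq))]

lemma Good.combo {A Sp Sn : Finset (Fin n → ℝ)} {f g : (Fin n → ℝ) → ℝ} {p : Fin n → ℝ}
    (hpA : p ∈ A) (hf : Good A Sp Sn f) (hg : Good A Sp Sn g) {t : ℝ} (ht : 0 ≤ t)
    (hfp : f p ≠ 0) (hsum : f p + t * g p = 0) :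
    Good A Sp Sn (fun γ => f γ + t * g γ) := by
  obtain ⟨f1, f2, f3, f4⟩ := hf
  obtain ⟨g1, g2, g3, g4⟩ := hg
  refine ⟨fun x => ?_, ?_, fun q hq => ?_, fun q hq => ?_⟩
  · rw [expSum_add, expSum_smul]
    have := f1 x; have := g1 x
    nlinarith
  · intro γ₁ hγ₁ γ₂ hγ₂ h1 h2
    have hne1 : γ₁ ≠ p := by rintro rfl; simp only at h1; linarith
    have hne2 : γ₂ ≠ p := by rintro rfl; simp only at h2; linarith
    have key : ∀ γ, f γ + t * g γ < 0 → f γ < 0 ∨ g γ < 0 := by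
      intro γ h
      by_contra hcon
      push_neg at hcon
      nlinarith [mul_nonneg ht hcon.2]
    rcases key γ₁ h1 with k1 | k1 <;> rcases key γ₂ h2 with k2 | k2
    · exact f2 _ hγ₁ _ hγ₂ k1 k2
    · exfalso
      rcases lt_or_gt_of_ne hfp with hfpneg | hfppos
      · exact hne1 (f2 _ hγ₁ _ hpA k1 hfpneg)
      · have htg : t * g p < 0 := by linarith
        have hgp : g p < 0 := by
          by_contra hcon; push_neg at hcon
          nlinarith [mul_nonneg ht hcon]
        exact hne2 (g2 _ hγ₂ _ hpA k2 hgp)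
    · exfalso
      rcases lt_or_gt_of_ne hfp with hfpneg | hfppos
      · exact hne2 (f2 _ hγ₂ _ hpA k2 hfpneg)
      · have htg : t * g p < 0 := by linarith
        have hgp : g p < 0 := by
          by_contra hcon; push_neg at hcon
          nlinarith [mul_nonneg ht hcon]
        exact hne1 (g2 _ hγ₁ _ hpA k1 hgp)
    · exact g2 _ hγ₁ _ hγ₂ k1 k2
  · show 0 ≤ f q + t * g q
    have := mul_nonneg ht (g3 q hq)
    have := f3 q hq
    linarith
  · show f q + t * g q ≤ 0
    have h5 : t * g q ≤ 0 := by nlinarith [mul_nonneg ht (neg_nonneg.2 (g4 q hq))]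
    have := f4 q hq
    linarith

lemma pair_step {A Sp Sn : Finset (Fin n → ℝ)} {p : Fin n → ℝ} (hpA : p ∈ A)
    {fi fj : (Fin n → ℝ) → ℝ}
    (hgi : Good A Sp Sn fi) (hgj : Good A Sp Sn fj) (hip : 0 < fi p) (hjp : fj p < 0) :
    ∃ h r : (Fin n → ℝ) → ℝ, (∀ γ, h γ + r γ = fi γ + fj γ) ∧
      Good A Sp Sn h ∧ Good A Sp Sn r ∧ h p = 0 := by
  have hjne : fj p ≠ 0 := ne_of_lt hjp
  have hine : fi p ≠ 0 := ne_of_gt hip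
  have hnb : 0 < -fj p := by linarith
  by_cases hc : fi p ≤ -fj p
  · set t : ℝ := fi p / (-fj p) with ht
    have ht0 : 0 ≤ t := le_of_lt (div_pos hip hnb)
    have ht1 : t ≤ 1 := (div_le_one hnb).2 hc
    have heq : fi p + t * fj p = 0 := by
      rw [ht, div_mul_eq_mul_div, mul_div_assoc, div_neg, div_self hjne]; ring
    refine ⟨fun γ => fi γ + t * fj γ, fun γ => (1 - t) * fj γ, fun γ => by ring, ?_, ?_, heq⟩
    · exact hgi.combo hpA hgj ht0 hine heq
    · exact hgj.smul (by linarith)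
  · push_neg at hc
    set t : ℝ := (-fj p) / fi p with ht
    have ht0 : 0 ≤ t := le_of_lt (div_pos hnb hip)
    have ht1 : t ≤ 1 := le_of_lt ((div_lt_one hip).2 hc)
    have heq : fj p + t * fi p = 0 := by
      rw [ht, div_mul_cancel₀ _ hine]; ring
    refine ⟨fun γ => fj γ + t * fi γ, fun γ => (1 - t) * fi γ, fun γ => by ring, ?_, ?_, heq⟩
    · exact hgj.combo hpA hgi ht0 hjne heq
    · exact hgi.smul (by linarith)

lemma elim {A Sp Sn : Finset (Fin n → ℝ)} {p : Fin n → ℝ} (hpA : p ∈ A) (s : ℝ) {m : ℕ} :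
    ∀ (k : ℕ) (d : Fin m → (Fin n → ℝ) → ℝ),
      (univ.filter fun i => d i p ≠ 0).card ≤ k →
      (∀ i, Good A Sp Sn (d i)) →
      0 ≤ s * ∑ i, d i p →
      ∃ d' : Fin m → (Fin n → ℝ) → ℝ,
        (∀ γ, ∑ i, d' i γ = ∑ i, d i γ) ∧ (∀ i, Good A Sp Sn (d' i)) ∧
        ∀ i, 0 ≤ s * d' i p := by
  intro k
  induction k with
  | zero =>
    intro d hcard hgood _
    have hz : ∀ i, d i p = 0 := by
      intro i
      by_contra hne
      have hmem : i ∈ univ.filter fun i => d i p ≠ 0 := by simp [hne]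
      have := Finset.card_pos.2 ⟨i, hmem⟩
      omega
    exact ⟨d, fun γ => rfl, hgood, fun i => by rw [hz i]; simp⟩
  | succ k ih =>
    intro d hcard hgood hs
    by_cases hall : ∀ i, 0 ≤ s * d i p
    · exact ⟨d, fun γ => rfl, hgood, hall⟩
    push_neg at hall
    obtain ⟨j0, hj0⟩ := hall
    have hex : ∃ i0, 0 < s * d i0 p := by
      by_contra hno
      push_neg at hno
      have h1 : ∑ i, s * d i p < ∑ _i : Fin m, (0 : ℝ) :=
        Finset.sum_lt_sum (fun i _ => hno i) ⟨j0, mem_univ _, hj0⟩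
      rw [Finset.mul_sum] at hs
      simp only [Finset.sum_const_zero] at h1
      linarith
    obtain ⟨i0, hi0⟩ := hex
    obtain ⟨i, j, hdi, hdj⟩ : ∃ i j, 0 < d i p ∧ d j p < 0 := by
      rcases lt_trichotomy s 0 with hneg | h0 | hpos
      · refine ⟨j0, i0, ?_, ?_⟩ <;> nlinarith
      · rw [h0] at hi0; simp at hi0
      · refine ⟨i0, j0, ?_, ?_⟩ <;> nlinarith
    have hij : i ≠ j := by
      rintro rfl; linarith
    obtain ⟨h, r, hpair, hgh, hgr, hhp⟩ := pair_step hpA (hgood i) (hgood j) hdi hdj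
    set d' : Fin m → (Fin n → ℝ) → ℝ :=
      fun kk => if kk = i then h else if kk = j then r else d kk with hd'
    have hd'i : d' i = h := by simp [hd']
    have hd'j : d' j = r := by simp [hd', hij.symm]
    have hd'other : ∀ kk, kk ≠ i → kk ≠ j → d' kk = d kk := by
      intro kk h1 h2; simp [hd', h1, h2]
    have hsums : ∀ γ, ∑ kk, d' kk γ = ∑ kk, d kk γ := by
      intro γ
      have hzero : ∀ kk ∈ (univ : Finset (Fin m)), kk ∉ ({i, j} : Finset (Fin m)) →
          d' kk γ - d kk γ = 0 := by
        intro kk _ hk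
        simp only [Finset.mem_insert, Finset.mem_singleton, not_or] at hk
        rw [hd'other kk hk.1 hk.2]; ring
      have heq : ∑ kk ∈ ({i, j} : Finset (Fin m)), (d' kk γ - d kk γ)
          = ∑ kk, (d' kk γ - d kk γ) :=
        Finset.sum_subset (Finset.subset_univ _) hzero
      rw [Finset.sum_pair hij, hd'i, hd'j] at heq
      have h2 : ∑ kk, (d' kk γ - d kk γ) = 0 := by
        rw [← heq]
        have := hpair γ
        ring_nf
        linarith
      rw [Finset.sum_sub_distrib] at h2
      linarith
    have hgood' : ∀ kk, Good A Sp Sn (d' kk) := by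
      intro kk
      by_cases h1 : kk = i
      · rw [h1, hd'i]; exact hgh
      by_cases h2 : kk = j
      · rw [h2, hd'j]; exact hgr
      · rw [hd'other kk h1 h2]; exact hgood kk
    have hcard' : (univ.filter fun kk => d' kk p ≠ 0).card ≤ k := by
      have hsub : (univ.filter fun kk => d' kk p ≠ 0) ⊆
          (univ.filter fun kk => d kk p ≠ 0).erase i := by
        intro kk hk
        simp only [Finset.mem_filter, Finset.mem_univ, true_and] at hk
        have hki : kk ≠ i := by
          rintro rfl
          rw [hd'i] at hk
          exact hk hhp
        refine Finset.mem_erase.2 ⟨hki, ?_⟩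
        simp only [Finset.mem_filter, Finset.mem_univ, true_and]
        by_cases hkj : kk = j
        · rw [hkj]; exact ne_of_lt hdj
        · rw [hd'other kk hki hkj] at hk; exact hk
      have hi_mem : i ∈ univ.filter fun kk => d kk p ≠ 0 := by
        simp [ne_of_gt hdi]
      have hle := Finset.card_le_card hsub
      rw [Finset.card_erase_of_mem hi_mem] at hle
      have := Finset.card_pos.2 ⟨i, hi_mem⟩
      omega
    have hs' : 0 ≤ s * ∑ kk, d' kk p := by rw [hsums p]; exact hs
    obtain ⟨d'', H1, H2, H3⟩ := ih d' hcard' hgood' hs'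
    exact ⟨d'', fun γ => (H1 γ).trans (hsums γ), H2, H3⟩

lemma good_insert_pos {A Sp Sn : Finset (Fin n → ℝ)} {f : (Fin n → ℝ) → ℝ}
    {a : Fin n → ℝ} (hf : Good A Sp Sn f) (ha : 0 ≤ f a) :
    Good A (insert a Sp) Sn f := by
  obtain ⟨h1, h2, h3, h4⟩ := hf
  refine ⟨h1, h2, fun q hq => ?_, h4⟩
  rcases Finset.mem_insert.1 hq with rfl | hq
  · exact ha
  · exact h3 q hq

lemma good_insert_neg {A Sp Sn : Finset (Fin n → ℝ)} {f : (Fin n → ℝ) → ℝ}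
    {a : Fin n → ℝ} (hf : Good A Sp Sn f) (ha : f a ≤ 0) :
    Good A Sp (insert a Sn) f := by
  obtain ⟨h1, h2, h3, h4⟩ := hf
  refine ⟨h1, h2, h3, fun q hq => ?_⟩
  rcases Finset.mem_insert.1 hq with rfl | hq
  · exact ha
  · exact h4 q hq

lemma phase_pos {A : Finset (Fin n → ℝ)} {m : ℕ} (Sn : Finset (Fin n → ℝ))
    (T : Finset (Fin n → ℝ)) :
    T ⊆ A → ∀ d : Fin m → (Fin n → ℝ) → ℝ, (∀ i, Good A ∅ Sn (d i)) →
      (∀ q ∈ T, 0 ≤ ∑ i, d i q) →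
      ∃ d' : Fin m → (Fin n → ℝ) → ℝ,
        (∀ γ, ∑ i, d' i γ = ∑ i, d i γ) ∧ ∀ i, Good A T Sn (d' i) := by
  induction T using Finset.induction_on with
  | empty =>
    intro _ d hg _
    exact ⟨d, fun _ => rfl, hg⟩
  | @insert a T ha ih =>
    intro hsub d hg hsign
    obtain ⟨d1, hs1, hg1⟩ := ih ((Finset.subset_insert a T).trans hsub) d hg
      (fun q hq => hsign q (Finset.mem_insert_of_mem hq))
    have haA : a ∈ A := hsub (Finset.mem_insert_self a T)
    obtain ⟨d2, hs2, hg2, hpos⟩ := elim haA 1 _ d1 le_rfl hg1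
      (by rw [one_mul, hs1 a]; exact hsign a (Finset.mem_insert_self a T))
    refine ⟨d2, fun γ => (hs2 γ).trans (hs1 γ), fun i => ?_⟩
    exact good_insert_pos (hg2 i) (by have := hpos i; linarith)

lemma phase_neg {A : Finset (Fin n → ℝ)} {m : ℕ} (Sp : Finset (Fin n → ℝ))
    (T : Finset (Fin n → ℝ)) :
    T ⊆ A → ∀ d : Fin m → (Fin n → ℝ) → ℝ, (∀ i, Good A Sp ∅ (d i)) →
      (∀ q ∈ T, ∑ i, d i q ≤ 0) →
      ∃ d' : Fin m → (Fin n → ℝ) → ℝ,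
        (∀ γ, ∑ i, d' i γ = ∑ i, d i γ) ∧ ∀ i, Good A Sp T (d' i) := by
  induction T using Finset.induction_on with
  | empty =>
    intro _ d hg _
    exact ⟨d, fun _ => rfl, hg⟩
  | @insert a T ha ih =>
    intro hsub d hg hsign
    obtain ⟨d1, hs1, hg1⟩ := ih ((Finset.subset_insert a T).trans hsub) d hg
      (fun q hq => hsign q (Finset.mem_insert_of_mem hq))
    have haA : a ∈ A := hsub (Finset.mem_insert_self a T)
    obtain ⟨d2, hs2, hg2, hpos⟩ := elim haA (-1) _ d1 le_rfl hg1
      (by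
        have := hsign a (Finset.mem_insert_self a T)
        rw [hs1 a] at *
        nlinarith [hsign a (Finset.mem_insert_self a T), hs1 a])
    refine ⟨d2, fun γ => (hs2 γ).trans (hs1 γ), fun i => ?_⟩
    exact good_insert_neg (hg2 i) (by have := hpos i; nlinarith)

end SageAux

/-- Every element of the signed SONC cone decomposes into AGE summands, one for
each negative exponent. -/
theorem sage_decomposition {n : ℕ}
    (Ap An : Finset (Fin n → ℝ)) (hdisj : Disjoint Ap An)
    (hAp : Ap.Nonempty) (hAn : An.Nonempty)
    (c : (Fin n → ℝ) → ℝ) (hc : InSAGE Ap An c) :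
    ∃ d : (Fin n → ℝ) → ((Fin n → ℝ) → ℝ),
      (∀ γ ∈ Ap ∪ An, c γ = ∑ β ∈ An, d β γ) ∧
      (∀ β ∈ An, (∀ x : Fin n → ℝ, 0 ≤ expSum (Ap ∪ An) (d β) x) ∧ ∀ α ∈ Ap, 0 ≤ d β α) ∧
      (∀ β ∈ An, ∀ γ ∈ An, γ ≠ β → d β γ = 0) := by
  classical
  open SageAux in
  obtain ⟨hcp, hcn, m, d0, hdc, hone, hnn⟩ := hc
  set A : Finset (Fin n → ℝ) := Ap ∪ An with hA
  have hApA : Ap ⊆ A := Finset.subset_union_left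
  have hAnA : An ⊆ A := Finset.subset_union_right
  have hg0 : ∀ i, Good A ∅ ∅ (d0 i) := fun i => ⟨hnn i, hone i, by simp, by simp⟩
  obtain ⟨d1, hs1, hg1⟩ := phase_pos (∅ : Finset (Fin n → ℝ)) Ap hApA d0 hg0
    (fun q hq => by rw [← hdc q (hApA hq)]; exact hcp q hq)
  obtain ⟨d2, hs2, hg2⟩ := phase_neg Ap An hAnA d1 hg1
    (fun q hq => by rw [hs1 q, ← hdc q (hAnA hq)]; exact hcn q hq)
  -- assignment of each summand to its (unique) negative point in An
  set b : Fin m → (Fin n → ℝ) :=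
    fun i => if h : ∃ β ∈ An, d2 i β < 0 then h.choose else hAn.choose with hbdef
  have hbmem : ∀ i, b i ∈ An := by
    intro i
    by_cases h : ∃ β ∈ An, d2 i β < 0
    · simp only [hbdef]; rw [dif_pos h]; exact h.choose_spec.1
    · simp only [hbdef]; rw [dif_neg h]; exact hAn.choose_spec
  have hbneg : ∀ i γ, γ ∈ An → d2 i γ < 0 → b i = γ := by
    intro i γ hγ hneg
    have h : ∃ β ∈ An, d2 i β < 0 := ⟨γ, hγ, hneg⟩
    have hspec := h.choose_spec
    have hb : b i = h.choose := by simp only [hbdef]; rw [dif_pos h]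
    rw [hb]
    exact (hg2 i).2.1 _ (hAnA hspec.1) _ (hAnA hγ) hspec.2 hneg
  refine ⟨fun β γ => ∑ i ∈ univ.filter (fun i => b i = β), d2 i γ, ?_, ?_, ?_⟩
  · intro γ hγ
    rw [hdc γ hγ, ← hs1 γ, ← hs2 γ]
    exact (Finset.sum_fiberwise_of_maps_to (fun i _ => hbmem i) (fun i => d2 i γ)).symm
  · intro β hβ
    constructor
    · intro x
      show 0 ≤ expSum A (fun γ => ∑ i ∈ univ.filter (fun i => b i = β), d2 i γ) x
      rw [expSum_sum]
      exact Finset.sum_nonneg fun i _ => (hg2 i).1 x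
    · intro α hα
      exact Finset.sum_nonneg fun i _ => (hg2 i).2.2.1 α hα
  · intro β hβ γ hγ hne
    apply Finset.sum_eq_zero
    intro i hi
    simp only [Finset.mem_filter, Finset.mem_univ, true_and] at hi
    rcases lt_or_eq_of_le ((hg2 i).2.2.2 γ hγ) with hlt | he
    · exfalso
      have := hbneg i γ hγ hlt
      rw [hi] at this
      exact hne (this.symm ▸ rfl)
    · exact he
end

section
/- Let A' ⊆ ℝⁿ be a finite set, let c_α > 0 for all α ∈ A', let β ∈ ℝⁿ with β ∉ A' and c_β < 0, and suppose the exponential sum f(x) = ∑_{α∈A'} c_α·exp(⟨x,α⟩) + c_β·exp(⟨x,β⟩) is nonnegative on ℝⁿ. Then f is a finite sum of nonnegative circuit functions and nonnegative exponential monomials: there exist finitely many functions g_1,…,g_m and coefficients d_α ≥ 0 (α ∈ A') such that f = ∑_{i=1}^m g_i + ∑_{α∈A'} d_α·exp(⟨x,α⟩), where for each i there is an affinely independent subset S_i ⊆ A' with β in the convex hull of S_i, coefficients a^{(i)}_α ≥ 0 (α ∈ S_i) and b_i ≤ 0, such that g_i(x) = ∑_{α∈S_i} a^{(i)}_α·exp(⟨x,α⟩)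 + b_i·exp(⟨x,β⟩) is nonnegative on ℝⁿ. -/
set_option maxHeartbeats 1000000
open Finset

namespace AgeSonc
variable {n : ℕ}

noncomputable def dot (x y : Fin n → ℝ) : ℝ := ∑ i, x i * y i

lemma dot_comm (x y : Fin n → ℝ) : dot x y = dot y x := by simp [dot, mul_comm]

lemma dot_add_left (x y w : Fin n → ℝ) : dot (x + y) w = dot x w + dot y w := by
  simp [dot, add_mul, Finset.sum_add_distrib]

lemma dot_sub_left (x y w : Fin n → ℝ) : dot (x - y) w = dot x w - dot y w := by
  simp [dot, sub_mul, Finset.sum_sub_distrib]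

lemma dot_smul_left (k : ℝ) (x w : Fin n → ℝ) : dot (k • x) w = k * dot x w := by
  simp [dot, Finset.mul_sum]
  exact Finset.sum_congr rfl (fun i _ => by ring)

lemma dot_sub_right (x y w : Fin n → ℝ) : dot w (x - y) = dot w x - dot w y := by
  rw [dot_comm, dot_sub_left, dot_comm x w, dot_comm y w]

lemma dot_add_right (x y w : Fin n → ℝ) : dot w (x + y) = dot w x + dot w y := by
  rw [dot_comm, dot_add_left, dot_comm x w, dot_comm y w]

lemma dot_sum_right {ι : Type*} (s : Finset ι) (f : ι → Fin n → ℝ) (x : Fin n → ℝ) :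
    dot x (∑ i ∈ s, f i) = ∑ i ∈ s, dot x (f i) := by
  simp [dot, Finset.mul_sum]
  rw [Finset.sum_comm]

lemma dot_smul_right (k : ℝ) (x w : Fin n → ℝ) : dot w (k • x) = k * dot w x := by
  rw [dot_comm, dot_smul_left, dot_comm]

lemma dot_zero_right (w : Fin n → ℝ) : dot w 0 = 0 := by simp [dot]

lemma dot_self_eq_zero {x : Fin n → ℝ} (h : dot x x = 0) : x = 0 := by
  have hs : ∀ i ∈ Finset.univ (α := Fin n), 0 ≤ x i * x i := fun i _ => mul_self_nonneg _
  funext i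
  have := (Finset.sum_eq_zero_iff_of_nonneg hs).1 h i (Finset.mem_univ i)
  have := mul_self_eq_zero.1 this
  simpa using this

lemma dot_zero_left (w : Fin n → ℝ) : dot 0 w = 0 := by simp [dot]

lemma continuous_dot_left (w : Fin n → ℝ) : Continuous (fun x : Fin n → ℝ => dot x w) := by
  unfold dot
  exact continuous_finset_sum _ (fun i _ => (continuous_apply i).mul continuous_const)

lemma continuous_sup'_aux {s : Finset (Fin n → ℝ)} (hs : s.Nonempty)
    (g : (Fin n → ℝ) → (Fin n → ℝ) → ℝ) (hg : ∀ a, Continuous (g a)) :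
    Continuous (fun x => s.sup' hs (fun a => g a x)) := by
  induction s using Finset.cons_induction with
  | empty => simp at hs
  | cons a t ha ih =>
    rcases t.eq_empty_or_nonempty with rfl | hs'
    · simpa using hg a
    · have heq : (fun x => (Finset.cons a t ha).sup' hs (fun b => g b x))
          = fun x => (g a x) ⊔ (t.sup' hs' (fun b => g b x)) := by
        funext x
        exact Finset.sup'_cons (f := fun b => g b x) hs'
      rw [heq]
      exact (hg a).max (ih hs')

/-- Existence of a critical point for `x ↦ ∑ c α exp (dot x (α - β))` when `β` is in the
"relative interior" direction-wise. -/
lemma exists_critical (A' : Finset (Fin n → ℝ)) (hA : A'.Nonempty)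
    (c : (Fin n → ℝ) → ℝ) (hc : ∀ α ∈ A', 0 < c α)
    (β : Fin n → ℝ) (hβ : β ∉ A')
    (hrel : ∀ y : Fin n → ℝ, (∀ α ∈ A', dot y α ≤ dot y β) → ∀ α ∈ A', dot y α = dot y β) :
    ∃ xs : Fin n → ℝ, (∑ α ∈ A', (c α * Real.exp (dot xs (α - β))) • (α - β)) = 0 := by
  classical
  set V : Submodule ℝ (Fin n → ℝ) := Submodule.span ℝ ((fun α => α - β) '' ↑A') with hV
  set H : (Fin n → ℝ) → ℝ := fun x => ∑ α ∈ A', c α * Real.exp (dot x (α - β)) with hH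
  have contH : Continuous H := by
    exact continuous_finset_sum _ (fun α _ =>
      continuous_const.mul (Real.continuous_exp.comp (continuous_dot_left (α - β))))
  -- orthogonality to all generators means zero for elements of V
  have perp_zero : ∀ z : Fin n → ℝ, z ∈ V → (∀ α ∈ A', dot z (α - β) = 0) → z = 0 := by
    intro z hzV hperp
    have hzero : ∀ v ∈ V, dot z v = 0 := by
      intro v hv
      induction hv using Submodule.span_induction with
      | mem v hv =>
        obtain ⟨α, hα, rfl⟩ := hv
        exact hperp α hα
      | zero => exact dot_zero_right z
      | add u w _ _ hu hw => rw [dot_add_right, hu, hw, add_zero]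
      | smul k u _ hu => rw [dot_smul_right, hu, mul_zero]
    exact dot_self_eq_zero (hzero z hzV)
  -- M : support function direction-max
  set M : (Fin n → ℝ) → ℝ := fun x => A'.sup' hA (fun α => dot x (α - β)) with hM
  have contM : Continuous M := by
    simp only [hM]
    exact continuous_sup'_aux hA (fun α x => dot x (α - β)) (fun α => continuous_dot_left (α - β))
  have hMpos_on : ∀ z : Fin n → ℝ, z ∈ V → z ≠ 0 → 0 < M z := by
    intro z hzV hzne
    by_contra h
    push_neg at h
    have hle : ∀ α ∈ A', dot z α ≤ dot z β := by
      intro α hα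
      have hle' : dot z (α - β) ≤ M z := Finset.le_sup' (fun α => dot z (α - β)) hα
      have h2 : dot z (α - β) ≤ 0 := le_trans hle' h
      rw [dot_sub_right] at h2; linarith
    have heq := hrel z hle
    have hperp : ∀ α ∈ A', dot z (α - β) = 0 := by
      intro α hα; rw [dot_sub_right, heq α hα, sub_self]
    exact hzne (perp_zero z hzV hperp)
  -- compact sphere ∩ V
  have hVclosed : IsClosed (V : Set (Fin n → ℝ)) := Submodule.closed_of_finiteDimensional V
  set K : Set (Fin n → ℝ) := Metric.sphere 0 1 ∩ ↑V with hK
  have hKcompact : IsCompact K := (isCompact_sphere 0 1).inter_right hVclosed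
  obtain ⟨α₀, hα₀⟩ := id hA
  have hu₀ : α₀ - β ≠ 0 := sub_ne_zero.2 (by rintro rfl; exact hβ hα₀)
  have hKne : K.Nonempty := by
    refine ⟨(‖α₀ - β‖⁻¹ : ℝ) • (α₀ - β), ?_, ?_⟩
    · simp [norm_smul, norm_inv, inv_mul_cancel₀ (norm_ne_zero_iff.2 hu₀)]
    · exact Submodule.smul_mem V _ (Submodule.subset_span ⟨α₀, hα₀, rfl⟩)
  obtain ⟨z₀, hz₀K, hz₀min⟩ := hKcompact.exists_isMinOn hKne contM.continuousOn
  set δ := M z₀ with hδ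
  have hz₀ne : z₀ ≠ 0 := by
    intro h
    have := hz₀K.1
    rw [h] at this
    simp at this
  have hδpos : 0 < δ := hMpos_on z₀ hz₀K.2 hz₀ne
  -- homogeneity and coercivity: δ * ‖x‖ ≤ M x on V
  have hMhom : ∀ (s : ℝ), 0 ≤ s → ∀ x, M (s • x) = s * M x := by
    intro s hs x
    simp only [hM]
    have h1 : (fun α => dot (s • x) (α - β)) = fun α => s * dot x (α - β) := by
      funext α; rw [dot_smul_left]
    rw [h1]
    exact (Finset.comp_sup'_eq_sup'_comp hA (fun r => s * r)
      (fun a b => mul_max_of_nonneg a b hs)).symm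
  have hcoer : ∀ x : Fin n → ℝ, x ∈ V → δ * ‖x‖ ≤ M x := by
    intro x hxV
    by_cases hx0 : x = 0
    · subst hx0
      have hM0 : M 0 = 0 := by
        simp only [hM]
        have hfn : (fun α => dot (0 : Fin n → ℝ) (α - β)) = fun _ => (0:ℝ) :=
          funext fun α => dot_zero_left _
        rw [hfn]
        exact Finset.sup'_const hA 0
      simp [hM0]
    · have hz : (‖x‖⁻¹ : ℝ) • x ∈ K := by
        refine ⟨?_, Submodule.smul_mem V _ hxV⟩
        simp [norm_smul, norm_inv, inv_mul_cancel₀ (norm_ne_zero_iff.2 hx0)]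
      have hδle : δ ≤ M ((‖x‖⁻¹ : ℝ) • x) := hz₀min hz
      rw [hMhom _ (by positivity) x] at hδle
      have hxpos : 0 < ‖x‖ := norm_pos_iff.2 hx0
      calc δ * ‖x‖ ≤ (‖x‖⁻¹ * M x) * ‖x‖ := by nlinarith
        _ = M x := by field_simp
  -- lower bound H by exponential of M
  set cmin := A'.inf' hA c with hcmin
  have hcminpos : 0 < cmin := by
    obtain ⟨α₁, hα₁, hval⟩ := Finset.exists_mem_eq_inf' hA c
    simp only [hcmin]; rw [hval]; exact hc α₁ hα₁
  have hHlb : ∀ x : Fin n → ℝ, cmin * Real.exp (M x) ≤ H x := by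
    intro x
    obtain ⟨α₁, hα₁, hval⟩ := Finset.exists_mem_eq_sup' hA (fun α => dot x (α - β))
    have h1 : cmin * Real.exp (M x) ≤ c α₁ * Real.exp (dot x (α₁ - β)) := by
      simp only [hM]; rw [hval]
      have : cmin ≤ c α₁ := Finset.inf'_le c hα₁
      have := Real.exp_pos (dot x (α₁ - β))
      nlinarith
    refine h1.trans ?_
    simp only [hH]
    exact Finset.single_le_sum (f := fun α => c α * Real.exp (dot x (α - β)))
      (fun α hα => le_of_lt (mul_pos (hc α hα) (Real.exp_pos _))) hα₁
  -- sublevel set is compact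
  set C : Set (Fin n → ℝ) := {x | x ∈ V ∧ H x ≤ H 0} with hC
  have hCclosed : IsClosed C := by
    have : C = (V : Set (Fin n → ℝ)) ∩ {x | H x ≤ H 0} := rfl
    rw [this]
    exact hVclosed.inter (isClosed_le contH continuous_const)
  have hH0pos : 0 < H 0 := by
    simp only [hH]
    exact Finset.sum_pos (fun α hα => mul_pos (hc α hα) (Real.exp_pos _)) hA
  have hCbdd : Bornology.IsBounded C := by
    apply (Metric.isBounded_closedBall (x := (0 : Fin n → ℝ))
      (r := Real.log (H 0 / cmin) / δ)).subset
    intro x hx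
    rw [Metric.mem_closedBall, dist_zero_right]
    have h1 : cmin * Real.exp (δ * ‖x‖) ≤ H 0 := by
      have := hHlb x
      have h2 : Real.exp (δ * ‖x‖) ≤ Real.exp (M x) := Real.exp_le_exp.2 (hcoer x hx.1)
      nlinarith [hx.2]
    have h2 : Real.exp (δ * ‖x‖) ≤ H 0 / cmin := by
      rw [le_div_iff₀ hcminpos]; linarith
    have h3 : δ * ‖x‖ ≤ Real.log (H 0 / cmin) := by
      rw [← Real.log_exp (δ * ‖x‖)]
      exact Real.log_le_log (Real.exp_pos _) h2
    exact (le_div_iff₀' hδpos).2 h3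
  have hCcompact : IsCompact C := Metric.isCompact_of_isClosed_isBounded hCclosed hCbdd
  have hCne : C.Nonempty := ⟨0, Submodule.zero_mem V, le_rfl⟩
  obtain ⟨xs, hxsC, hxsmin⟩ := hCcompact.exists_isMinOn hCne contH.continuousOn
  have hglobal : ∀ x ∈ V, H xs ≤ H x := by
    intro x hxV
    by_cases h : H x ≤ H 0
    · exact hxsmin ⟨hxV, h⟩
    · push_neg at h
      exact le_trans (hxsmin (⟨Submodule.zero_mem V, le_rfl⟩ : (0:Fin n → ℝ) ∈ C)) h.le
  -- derivative condition
  refine ⟨xs, ?_⟩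
  set u : Fin n → ℝ := ∑ α ∈ A', (c α * Real.exp (dot xs (α - β))) • (α - β) with hu
  have huV : u ∈ V := by
    rw [hu]
    exact Submodule.sum_mem V (fun α hα =>
      Submodule.smul_mem V _ (Submodule.subset_span ⟨α, hα, rfl⟩))
  set ψ : ℝ → ℝ := fun s => ∑ α ∈ A', c α * Real.exp (dot xs (α - β) + s * dot u (α - β)) with hψ
  have hψH : ∀ s : ℝ, ψ s = H (xs + s • u) := by
    intro s
    simp only [hψ, hH]
    refine Finset.sum_congr rfl fun α hα => ?_
    rw [dot_add_left, dot_smul_left]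
  have hψ0 : ψ 0 = H xs := by
    rw [hψH]; simp
  have hxsV : xs ∈ V := hxsC.1
  have hlocmin : IsLocalMin ψ 0 := by
    apply Filter.Eventually.of_forall
    intro s
    rw [hψ0, hψH]
    exact hglobal _ (Submodule.add_mem V hxsV (Submodule.smul_mem V s huV))
  have hder : HasDerivAt ψ
      (∑ α ∈ A', c α * (Real.exp (dot xs (α - β) + 0 * dot u (α - β)) * dot u (α - β))) 0 := by
    simp only [hψ]
    apply HasDerivAt.fun_sum
    intro α hα
    have h1 : HasDerivAt (fun s : ℝ => dot xs (α - β) + s * dot u (α - β))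
        (dot u (α - β)) 0 := by
      simpa using (hasDerivAt_mul_const (dot u (α - β))).const_add (dot xs (α - β))
    exact (h1.exp).const_mul (c α)
  have hD := hlocmin.hasDerivAt_eq_zero hder
  have hDu : dot u u = 0 := by
    rw [hu]
    rw [dot_sum_right]
    rw [← hD]
    refine Finset.sum_congr rfl fun α hα => ?_
    rw [dot_smul_right]
    simp
    ring
  have := dot_self_eq_zero hDu
  rw [hu] at this
  exact this


lemma decomp (A : Finset (Fin n → ℝ)) (β : Fin n → ℝ) :
    ∀ (k : ℕ) (l : (Fin n → ℝ) → ℝ),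
      (A.filter fun α => l α ≠ 0).card ≤ k →
      (∀ α ∈ A, 0 ≤ l α) → (∀ α, α ∉ A → l α = 0) →
      (∑ α ∈ A, l α) = 1 → (∑ α ∈ A, l α • α) = β →
      ∃ (m : ℕ) (θ : Fin m → ℝ) (lam : Fin m → (Fin n → ℝ) → ℝ),
        (∑ i, θ i) = 1 ∧
        (∀ i, 0 ≤ θ i ∧ (∀ α ∈ A, 0 ≤ lam i α) ∧ (∀ α, α ∉ A → lam i α = 0) ∧
          (∑ α ∈ A, lam i α) = 1 ∧ (∑ α ∈ A, lam i α • α) = β ∧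
          AffineIndependent ℝ
            (fun q : ((A.filter fun α => lam i α ≠ 0) : Set (Fin n → ℝ)) => (q : Fin n → ℝ))) ∧
        (∀ α, l α = ∑ i, θ i * lam i α) := by
  intro k
  induction k with
  | zero =>
    intro l hcard h0 hout h1 hβ
    exfalso
    have hz : ∀ α ∈ A, l α = 0 := by
      intro α hα; by_contra h
      have hm : α ∈ A.filter fun α => l α ≠ 0 := mem_filter.2 ⟨hα, h⟩
      have := card_pos.2 ⟨α, hm⟩; omega
    rw [Finset.sum_eq_zero hz] at h1; norm_num at h1
  | succ k ih =>
    intro l hcard h0 hout h1 hβ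
    by_cases hind : AffineIndependent ℝ
        (fun q : ((A.filter fun α => l α ≠ 0) : Set (Fin n → ℝ)) => (q : Fin n → ℝ))
    · exact ⟨1, fun _ => 1, fun _ => l, by simp,
        fun i => ⟨zero_le_one, h0, hout, h1, hβ, hind⟩, fun α => by simp⟩
    · set F := A.filter fun α => l α ≠ 0 with hFdef
      have hFA : F ⊆ A := filter_subset _ _
      have hlpos : ∀ v ∈ F, 0 < l v := by
        intro v hv
        rcases mem_filter.1 hv with ⟨hvA, hvne⟩
        exact lt_of_le_of_ne (h0 v hvA) (Ne.symm hvne)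
      have hlzero : ∀ v ∈ A, v ∉ F → l v = 0 := by
        intro v hvA hvF
        by_contra h
        exact hvF (mem_filter.2 ⟨hvA, h⟩)
      obtain ⟨w, hwv, hws, x₀, hx₀F, hx₀⟩ :=
        exists_nontrivial_relation_sum_zero_of_not_affine_ind (k := ℝ) (t := F) hind
      -- positive and negative parts both nonempty
      have hpos : ∃ v ∈ F, 0 < w v := by
        by_contra h
        push_neg at h
        have := (Finset.sum_eq_zero_iff_of_nonpos h).1 hws x₀ hx₀F
        exact hx₀ this
      have hneg : ∃ v ∈ F, w v < 0 := by
        by_contra h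
        push_neg at h
        have := (Finset.sum_eq_zero_iff_of_nonneg h).1 hws x₀ hx₀F
        exact hx₀ this
      obtain ⟨vp0, hvp0⟩ := hpos
      obtain ⟨vm0, hvm0⟩ := hneg
      have hFp : (F.filter fun v => 0 < w v).Nonempty := ⟨vp0, mem_filter.2 hvp0⟩
      have hFm : (F.filter fun v => w v < 0).Nonempty := ⟨vm0, mem_filter.2 hvm0⟩
      obtain ⟨vp, hvpmem, hvpmin⟩ :=
        Finset.exists_min_image _ (fun v => l v / w v) hFp
      obtain ⟨vm, hvmmem, hvmmin⟩ :=
        Finset.exists_min_image _ (fun v => l v / (-(w v))) hFm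
      rcases mem_filter.1 hvpmem with ⟨hvpF, hvpw⟩
      rcases mem_filter.1 hvmmem with ⟨hvmF, hvmw⟩
      set tp := l vp / w vp with htp
      set tm := l vm / (-(w vm)) with htm
      have htppos : 0 < tp := div_pos (hlpos _ hvpF) hvpw
      have htmpos : 0 < tm := div_pos (hlpos _ hvmF) (by linarith)
      set W : (Fin n → ℝ) → ℝ := fun v => if v ∈ F then w v else 0 with hWdef
      have hWs : (∑ v ∈ A, W v) = 0 := by
        rw [hWdef]
        rw [Finset.sum_ite_mem, Finset.inter_eq_right.2 hFA]
        exact hws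
      have hWv : (∑ v ∈ A, W v • v) = 0 := by
        have : (∑ v ∈ A, W v • v) = ∑ v ∈ A, (if v ∈ F then w v • v else 0) := by
          refine Finset.sum_congr rfl fun v _ => ?_
          by_cases h : v ∈ F <;> simp [hWdef, h]
        rw [this, Finset.sum_ite_mem, Finset.inter_eq_right.2 hFA]
        exact hwv
      set l₁ : (Fin n → ℝ) → ℝ := fun v => l v - tp * W v with hl₁
      set l₂ : (Fin n → ℝ) → ℝ := fun v => l v + tm * W v with hl₂
      -- properties of l₁
      have hW0 : ∀ v, v ∉ F → W v = 0 := fun v hv => by simp [hWdef, hv]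
      have h10 : ∀ v ∈ A, 0 ≤ l₁ v := by
        intro v hvA
        by_cases hvF : v ∈ F
        · by_cases hw : 0 < w v
          · have hmin := hvpmin v (mem_filter.2 ⟨hvF, hw⟩)
            have hle : tp * w v ≤ l v := (le_div_iff₀ hw).1 hmin
            simp [hl₁, hWdef, hvF]; linarith
          · push_neg at hw
            have : 0 ≤ -(tp * w v) := by nlinarith
            have hlv := h0 v hvA
            simp [hl₁, hWdef, hvF]; nlinarith
        · simp [hl₁, hW0 v hvF, h0 v hvA]
      have h1out : ∀ v, v ∉ A → l₁ v = 0 := by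
        intro v hv
        have : v ∉ F := fun h => hv (hFA h)
        simp [hl₁, hW0 v this, hout v hv]
      have h1sum : (∑ v ∈ A, l₁ v) = 1 := by
        simp only [hl₁]
        rw [Finset.sum_sub_distrib, h1, ← Finset.mul_sum, hWs]; ring
      have h1vec : (∑ v ∈ A, l₁ v • v) = β := by
        have : ∀ v, l₁ v • v = l v • v - tp • (W v • v) := by
          intro v; simp [hl₁, sub_smul, smul_smul]
        simp only [this]
        rw [Finset.sum_sub_distrib, hβ, ← Finset.smul_sum, hWv, smul_zero, sub_zero]
      have h1supp : (A.filter fun α => l₁ α ≠ 0) ⊆ F.erase vp := by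
        intro v hv
        rcases mem_filter.1 hv with ⟨hvA, hvne⟩
        have hvF : v ∈ F := by
          by_contra h
          exact hvne (by simp [hl₁, hW0 v h, hlzero v hvA h])
        refine Finset.mem_erase.2 ⟨?_, hvF⟩
        intro h; subst h
        apply hvne
        simp only [hl₁, hWdef, if_pos hvF, htp]
        field_simp
        ring
      have h1card : (A.filter fun α => l₁ α ≠ 0).card ≤ k := by
        have h1 := Finset.card_le_card h1supp
        have h2 : (F.erase vp).card = F.card - 1 := Finset.card_erase_of_mem hvpF
        have h3 : 1 ≤ F.card := Finset.card_pos.2 ⟨vp, hvpF⟩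
        omega
      -- properties of l₂
      have h20 : ∀ v ∈ A, 0 ≤ l₂ v := by
        intro v hvA
        by_cases hvF : v ∈ F
        · by_cases hw : w v < 0
          · have hmin := hvmmin v (mem_filter.2 ⟨hvF, hw⟩)
            have hwpos : 0 < -(w v) := by linarith
            have hle : tm * (-(w v)) ≤ l v := (le_div_iff₀ hwpos).1 hmin
            simp [hl₂, hWdef, hvF]; nlinarith
          · push_neg at hw
            have hlv := h0 v hvA
            simp [hl₂, hWdef, hvF]; nlinarith
        · simp [hl₂, hW0 v hvF, h0 v hvA]
      have h2out : ∀ v, v ∉ A → l₂ v = 0 := by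
        intro v hv
        have : v ∉ F := fun h => hv (hFA h)
        simp [hl₂, hW0 v this, hout v hv]
      have h2sum : (∑ v ∈ A, l₂ v) = 1 := by
        simp only [hl₂]
        rw [Finset.sum_add_distrib, h1, ← Finset.mul_sum, hWs]; ring
      have h2vec : (∑ v ∈ A, l₂ v • v) = β := by
        have : ∀ v, l₂ v • v = l v • v + tm • (W v • v) := by
          intro v; simp [hl₂, add_smul, smul_smul]
        simp only [this]
        rw [Finset.sum_add_distrib, hβ, ← Finset.smul_sum, hWv, smul_zero, add_zero]
      have h2supp : (A.filter fun α => l₂ α ≠ 0) ⊆ F.erase vm := by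
        intro v hv
        rcases mem_filter.1 hv with ⟨hvA, hvne⟩
        have hvF : v ∈ F := by
          by_contra h
          exact hvne (by simp [hl₂, hW0 v h, hlzero v hvA h])
        refine Finset.mem_erase.2 ⟨?_, hvF⟩
        intro h; subst h
        apply hvne
        have hwne : w v ≠ 0 := by intro h; rw [h] at hvmw; exact lt_irrefl _ hvmw
        simp only [hl₂, hWdef, if_pos hvF, htm]
        field_simp
        ring
      have h2card : (A.filter fun α => l₂ α ≠ 0).card ≤ k := by
        have h1 := Finset.card_le_card h2supp
        have h2 : (F.erase vm).card = F.card - 1 := Finset.card_erase_of_mem hvmF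
        have h3 : 1 ≤ F.card := Finset.card_pos.2 ⟨vm, hvmF⟩
        omega
      obtain ⟨m₁, θ₁, lam₁, hθ₁s, hprop₁, hrep₁⟩ := ih l₁ h1card h10 h1out h1sum h1vec
      obtain ⟨m₂, θ₂, lam₂, hθ₂s, hprop₂, hrep₂⟩ := ih l₂ h2card h20 h2out h2sum h2vec
      set μ := tm / (tp + tm) with hμ
      have hsum_ne : tp + tm ≠ 0 := by positivity
      have hμ0 : 0 ≤ μ := by positivity
      have hμ1 : 1 - μ = tp / (tp + tm) := by
        rw [hμ]
        field_simp
        ring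
      have h1μ0 : 0 ≤ 1 - μ := by rw [hμ1]; positivity
      have hlcomb : ∀ v, l v = μ * l₁ v + (1 - μ) * l₂ v := by
        intro v
        simp only [hl₁, hl₂, hμ]
        field_simp
        ring
      refine ⟨m₁ + m₂, Fin.addCases (fun i => μ * θ₁ i) (fun j => (1 - μ) * θ₂ j),
        Fin.addCases lam₁ lam₂, ?_, ?_, ?_⟩
      · rw [Fin.sum_univ_add]
        simp only [Fin.addCases_left, Fin.addCases_right]
        rw [← Finset.mul_sum, ← Finset.mul_sum, hθ₁s, hθ₂s]
        field_simp
        ring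
      · intro i
        refine Fin.addCases ?_ ?_ i
        · intro i
          have hθ : Fin.addCases (motive := fun _ => ℝ) (fun i => μ * θ₁ i)
              (fun j => (1 - μ) * θ₂ j) (Fin.castAdd m₂ i) = μ * θ₁ i := Fin.addCases_left i
          have hlam : Fin.addCases (motive := fun _ => (Fin n → ℝ) → ℝ) lam₁ lam₂
              (Fin.castAdd m₂ i) = lam₁ i := Fin.addCases_left i
          beta_reduce
          rw [hθ, hlam]
          obtain ⟨a, b, c, d, e, f⟩ := hprop₁ i
          exact ⟨mul_nonneg hμ0 a, b, c, d, e, f⟩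
        · intro j
          have hθ : Fin.addCases (motive := fun _ => ℝ) (fun i => μ * θ₁ i)
              (fun j => (1 - μ) * θ₂ j) (Fin.natAdd m₁ j) = (1 - μ) * θ₂ j := Fin.addCases_right j
          have hlam : Fin.addCases (motive := fun _ => (Fin n → ℝ) → ℝ) lam₁ lam₂
              (Fin.natAdd m₁ j) = lam₂ j := Fin.addCases_right j
          beta_reduce
          rw [hθ, hlam]
          obtain ⟨a, b, c, d, e, f⟩ := hprop₂ j
          exact ⟨mul_nonneg h1μ0 a, b, c, d, e, f⟩
      · intro α
        rw [Fin.sum_univ_add]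
        simp only [Fin.addCases_left, Fin.addCases_right]
        rw [hlcomb α, hrep₁ α, hrep₂ α, Finset.mul_sum, Finset.mul_sum]
        congr 1 <;> exact Finset.sum_congr rfl fun i _ => by ring


end AgeSonc


open AgeSonc

/-- Every nonnegative AGE exponential sum is a sum of nonnegative circuit
functions (supported on affinely independent subsets of `A'` together with `β`) and
nonnegative exponential monomials. -/
theorem age_is_sonc {n : ℕ}
    (A' : Finset (Fin n → ℝ)) (c : (Fin n → ℝ) → ℝ) (hc : ∀ α ∈ A', 0 < c α)
    (β : Fin n → ℝ) (hβ : β ∉ A') (cβ : ℝ) (hcβ : cβ < 0)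
    (hnn : ∀ x : Fin n → ℝ,
      0 ≤ (∑ α ∈ A', c α * Real.exp (∑ i, x i * α i)) + cβ * Real.exp (∑ i, x i * β i)) :
    ∃ (m : ℕ) (S : Fin m → Finset (Fin n → ℝ)) (a : Fin m → (Fin n → ℝ) → ℝ)
      (b : Fin m → ℝ) (d : (Fin n → ℝ) → ℝ),
      (∀ α ∈ A', 0 ≤ d α) ∧
      (∀ i : Fin m,
        S i ⊆ A' ∧
        AffineIndependent ℝ (fun p : (S i : Set (Fin n → ℝ)) => (p : Fin n → ℝ)) ∧
        β ∈ convexHull ℝ ((S i : Set (Fin n → ℝ))) ∧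
        (∀ α ∈ S i, 0 ≤ a i α) ∧ b i ≤ 0 ∧
        (∀ x : Fin n → ℝ,
          0 ≤ (∑ α ∈ S i, a i α * Real.exp (∑ j, x j * α j)) + b i * Real.exp (∑ j, x j * β j))) ∧
      (∀ x : Fin n → ℝ,
        (∑ α ∈ A', c α * Real.exp (∑ j, x j * α j)) + cβ * Real.exp (∑ j, x j * β j)
          = (∑ i : Fin m,
              ((∑ α ∈ S i, a i α * Real.exp (∑ j, x j * α j)) + b i * Real.exp (∑ j, x j * β j)))
            + ∑ α ∈ A', d α * Real.exp (∑ j, x j * α j)) := by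

  classical
  revert hc hβ hnn
  induction A' using Finset.strongInduction with
  | _ A' ih =>
  intro hc hβ hnn
  -- restate everything with `dot`
  suffices hgoal : ∃ (m : ℕ) (S : Fin m → Finset (Fin n → ℝ)) (a : Fin m → (Fin n → ℝ) → ℝ)
      (b : Fin m → ℝ) (d : (Fin n → ℝ) → ℝ),
      (∀ α ∈ A', 0 ≤ d α) ∧
      (∀ i : Fin m,
        S i ⊆ A' ∧
        AffineIndependent ℝ (fun p : (S i : Set (Fin n → ℝ)) => (p : Fin n → ℝ)) ∧
        β ∈ convexHull ℝ ((S i : Set (Fin n → ℝ))) ∧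
        (∀ α ∈ S i, 0 ≤ a i α) ∧ b i ≤ 0 ∧
        (∀ x : Fin n → ℝ,
          0 ≤ (∑ α ∈ S i, a i α * Real.exp (dot x α)) + b i * Real.exp (dot x β))) ∧
      (∀ x : Fin n → ℝ,
        (∑ α ∈ A', c α * Real.exp (dot x α)) + cβ * Real.exp (dot x β)
          = (∑ i : Fin m,
              ((∑ α ∈ S i, a i α * Real.exp (dot x α)) + b i * Real.exp (dot x β)))
            + ∑ α ∈ A', d α * Real.exp (dot x α)) by exact hgoal
  have hnn' : ∀ x : Fin n → ℝ,
      0 ≤ (∑ α ∈ A', c α * Real.exp (dot x α)) + cβ * Real.exp (dot x β) := hnn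
  by_cases hA : A' = ∅
  · exfalso
    have h := hnn' 0
    rw [hA] at h
    simp [dot] at h
    linarith
  have hAne : A'.Nonempty := Finset.nonempty_iff_ne_empty.2 hA
  by_cases hy : ∃ y : Fin n → ℝ, (∀ α ∈ A', dot y α ≤ dot y β) ∧ ∃ α₀ ∈ A', dot y α₀ < dot y β
  -- FACE CASE: pass to a proper subset
  · obtain ⟨y, hyle, α₀, hα₀A, hα₀lt⟩ := hy
    have hsub : (A'.filter (fun α => dot y α = dot y β)) ⊆ A' := filter_subset _ _
    have hssub : (A'.filter (fun α => dot y α = dot y β)) ⊂ A' := by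
      refine ⟨hsub, fun hcon => ?_⟩
      have h := (mem_filter.1 (hcon hα₀A)).2
      linarith
    have hc'' : ∀ α ∈ (A'.filter (fun α => dot y α = dot y β)), 0 < c α := fun α hα => hc α (hsub hα)
    have hβ'' : β ∉ (A'.filter (fun α => dot y α = dot y β)) := fun h => hβ (hsub h)
    have hnn'' : ∀ x : Fin n → ℝ,
        0 ≤ (∑ α ∈ (A'.filter (fun α => dot y α = dot y β)), c α * Real.exp (∑ i, x i * α i)) + cβ * Real.exp (∑ i, x i * β i) := by
      intro x
      show (0:ℝ) ≤ (∑ α ∈ (A'.filter (fun α => dot y α = dot y β)), c α * Real.exp (dot x α)) + cβ * Real.exp (dot x β)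
      set g : ℝ → ℝ := fun k =>
        (∑ α ∈ A', c α * Real.exp (dot x α) * Real.exp (k * (dot y α - dot y β)))
          + cβ * Real.exp (dot x β) with hg
      have hg0 : ∀ k, 0 ≤ g k := by
        intro k
        have hrewr : g k = Real.exp (-(k * dot y β)) *
            ((∑ α ∈ A', c α * Real.exp (dot (x + k • y) α))
              + cβ * Real.exp (dot (x + k • y) β)) := by
          simp only [hg]
          rw [mul_add]
          congr 1
          · rw [Finset.mul_sum]
            refine Finset.sum_congr rfl fun α hα => ?_
            simp only [dot_add_left, dot_smul_left, Real.exp_add, mul_sub, Real.exp_sub,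
              Real.exp_neg]
            field_simp
          · simp only [dot_add_left, dot_smul_left, Real.exp_add, Real.exp_neg]
            field_simp
        rw [hrewr]
        exact mul_nonneg (Real.exp_pos _).le (hnn' (x + k • y))
      have hglim : Filter.Tendsto g Filter.atTop
          (nhds ((∑ α ∈ (A'.filter (fun α => dot y α = dot y β)), c α * Real.exp (dot x α)) + cβ * Real.exp (dot x β))) := by
        have hsplit : (∑ α ∈ (A'.filter (fun α => dot y α = dot y β)), c α * Real.exp (dot x α))
            = ∑ α ∈ A', if dot y α = dot y β then c α * Real.exp (dot x α) else 0 := by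
          rw [Finset.sum_filter]
        rw [hsplit]
        apply Filter.Tendsto.add_const
        apply tendsto_finset_sum
        intro α hα
        by_cases h : dot y α = dot y β
        · have hfn : (fun k : ℝ => c α * Real.exp (dot x α) * Real.exp (k * (dot y α - dot y β)))
              = fun _ => c α * Real.exp (dot x α) := by
            funext k; rw [h, sub_self, mul_zero, Real.exp_zero, mul_one]
          rw [hfn, if_pos h]
          exact tendsto_const_nhds
        · rw [if_neg h]
          have hm : dot y α - dot y β < 0 := sub_neg.2 (lt_of_le_of_ne (hyle α hα) h)
          have h1 : Filter.Tendsto (fun k : ℝ => k * (dot y α - dot y β))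
              Filter.atTop Filter.atBot := Filter.Tendsto.atTop_mul_const_of_neg hm Filter.tendsto_id
          have h2 : Filter.Tendsto (fun k : ℝ => Real.exp (k * (dot y α - dot y β)))
              Filter.atTop (nhds 0) := Real.tendsto_exp_atBot.comp h1
          have h3 := h2.const_mul (c α * Real.exp (dot x α))
          simpa using h3
      exact ge_of_tendsto' hglim hg0
    obtain ⟨m, S, a, b, d, hd0, hper, heq⟩ := ih (A'.filter (fun α => dot y α = dot y β)) hssub hc'' hβ'' hnn''
    refine ⟨m, S, a, b, fun α => if α ∈ (A'.filter (fun α => dot y α = dot y β)) then d α else c α, ?_, ?_, ?_⟩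
    · intro α hα
      by_cases h : α ∈ (A'.filter (fun α => dot y α = dot y β))
      · simpa [h] using hd0 α h
      · simpa [h] using (hc α hα).le
    · intro i
      obtain ⟨h1, h2, h3, h4, h5, h6⟩ := hper i
      exact ⟨h1.trans hsub, h2, h3, h4, h5, fun x => h6 x⟩
    · intro x
      have heq' : (∑ α ∈ (A'.filter (fun α => dot y α = dot y β)), c α * Real.exp (dot x α)) + cβ * Real.exp (dot x β)
          = (∑ i : Fin m, ((∑ α ∈ S i, a i α * Real.exp (dot x α)) + b i * Real.exp (dot x β)))
            + ∑ α ∈ (A'.filter (fun α => dot y α = dot y β)), d α * Real.exp (dot x α) := heq x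
      have hsplitc : (∑ α ∈ A', c α * Real.exp (dot x α))
          = (∑ α ∈ (A'.filter (fun α => dot y α = dot y β)), c α * Real.exp (dot x α))
            + ∑ α ∈ A'.filter (fun α => ¬ dot y α = dot y β), c α * Real.exp (dot x α) := by
        exact (Finset.sum_filter_add_sum_filter_not A' _ _).symm
      have hsplitd : (∑ α ∈ A', (if α ∈ (A'.filter (fun α => dot y α = dot y β)) then d α else c α) * Real.exp (dot x α))
          = (∑ α ∈ (A'.filter (fun α => dot y α = dot y β)), d α * Real.exp (dot x α))
            + ∑ α ∈ A'.filter (fun α => ¬ dot y α = dot y β), c α * Real.exp (dot x α) := by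
        rw [← Finset.sum_filter_add_sum_filter_not A' (fun α => dot y α = dot y β)
          (fun α => (if α ∈ (A'.filter (fun α => dot y α = dot y β)) then d α else c α) * Real.exp (dot x α))]
        congr 1
        · refine Finset.sum_congr rfl fun α hα => ?_
          rw [if_pos hα]
        · refine Finset.sum_congr rfl fun α hα => ?_
          have hnotin : α ∉ (A'.filter (fun α => dot y α = dot y β)) := by
            intro hmem
            exact (mem_filter.1 hα).2 (mem_filter.1 hmem).2
          rw [if_neg hnotin]
      rw [hsplitc, hsplitd]
      linarith [heq']
  -- MAIN CASE
  · push_neg at hy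
    have hrel : ∀ y : Fin n → ℝ, (∀ α ∈ A', dot y α ≤ dot y β) → ∀ α ∈ A', dot y α = dot y β :=
      fun y h α hα => le_antisymm (h α hα) (hy y h α hα)
    obtain ⟨xs, hxs⟩ := exists_critical A' hAne c hc β hβ hrel
    set p : (Fin n → ℝ) → ℝ := fun α => c α * Real.exp (dot xs (α - β)) with hp
    have hppos : ∀ α ∈ A', 0 < p α := fun α hα => mul_pos (hc α hα) (Real.exp_pos _)
    set t := ∑ α ∈ A', p α with ht
    have htpos : 0 < t := Finset.sum_pos hppos hAne
    have htβ : (∑ α ∈ A', p α • α) = t • β := by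
      have h1 : (∑ α ∈ A', p α • (α - β)) = 0 := hxs
      have h2 : (∑ α ∈ A', p α • (α - β))
          = (∑ α ∈ A', p α • α) - t • β := by
        rw [ht, Finset.sum_smul, ← Finset.sum_sub_distrib]
        exact Finset.sum_congr rfl fun α _ => smul_sub _ _ _
      rw [h2] at h1
      exact sub_eq_zero.1 h1
    set l : (Fin n → ℝ) → ℝ := fun α => if α ∈ A' then p α / t else 0 with hl
    have hl0 : ∀ α ∈ A', 0 ≤ l α := by
      intro α hα
      simp only [hl, if_pos hα]
      exact div_nonneg (hppos α hα).le htpos.le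
    have hlout : ∀ α, α ∉ A' → l α = 0 := by
      intro α hα; simp only [hl, if_neg hα]
    have hlsum : (∑ α ∈ A', l α) = 1 := by
      have h1 : (∑ α ∈ A', l α) = ∑ α ∈ A', p α / t :=
        Finset.sum_congr rfl (fun α hα => by simp only [hl, if_pos hα])
      rw [h1, ← Finset.sum_div, ← ht, div_self htpos.ne']
    have hlvec : (∑ α ∈ A', l α • α) = β := by
      have h1 : (∑ α ∈ A', l α • α) = t⁻¹ • ∑ α ∈ A', p α • α := by
        rw [Finset.smul_sum]
        refine Finset.sum_congr rfl fun α hα => ?_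
        simp only [hl, if_pos hα]
        rw [div_eq_inv_mul, ← smul_smul]
      rw [h1, htβ, smul_smul, inv_mul_cancel₀ htpos.ne', one_smul]
    clear_value l t p
    obtain ⟨m, θ, lam, hθsum, hprop, hrep⟩ :=
      decomp A' β (A'.filter fun α => l α ≠ 0).card l le_rfl hl0 hlout hlsum hlvec
    have htc : 0 ≤ t + cβ := by
      have h := hnn' xs
      have hrw : (∑ α ∈ A', c α * Real.exp (dot xs α)) + cβ * Real.exp (dot xs β)
          = (t + cβ) * Real.exp (dot xs β) := by
        rw [add_mul, ht, Finset.sum_mul]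
        congr 1
        refine Finset.sum_congr rfl fun α hα => ?_
        simp only [hp]
        rw [mul_assoc, ← Real.exp_add, dot_sub_right]
        ring_nf
      rw [hrw] at h
      nlinarith [Real.exp_pos (dot xs β)]
    refine ⟨m, fun i => A'.filter (fun α => lam i α ≠ 0),
      fun i α => θ i * (lam i α * (t * Real.exp (-(dot xs (α - β))))),
      fun i => θ i * cβ, fun _ => 0, fun α _ => le_rfl, ?_, ?_⟩
    · intro i
      obtain ⟨hθ0, hlam0, hlamout, hlamsum, hlamvec, hai⟩ := hprop i
      set S := A'.filter (fun α => lam i α ≠ 0) with hS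
      have hSsub : S ⊆ A' := filter_subset _ _
      have hSsum : (∑ α ∈ S, lam i α) = 1 := by
        rw [hS, Finset.sum_filter_ne_zero]
        exact hlamsum
      have hSvec : (∑ α ∈ S, lam i α • α) = β := by
        rw [hS, Finset.sum_filter_of_ne]
        · exact hlamvec
        · intro α hα hne
          intro h0
          exact hne (by rw [h0, zero_smul])
      have hconv : β ∈ convexHull ℝ (S : Set (Fin n → ℝ)) := by
        have hmem := Finset.centerMass_mem_convexHull S
          (w := lam i) (z := fun α => α)
          (fun α hα => hlam0 α (hSsub hα)) (by rw [hSsum]; norm_num)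
          (fun α hα => Finset.mem_coe.2 hα)
        have hcm : S.centerMass (lam i) (fun α => α) = β := by
          rw [Finset.centerMass, hSsum, hSvec]
          simp
        rwa [hcm] at hmem
      refine ⟨hSsub, hai, hconv, ?_, ?_, ?_⟩
      · intro α hα
        have := hlam0 α (hSsub hα)
        positivity
      · exact mul_nonpos_iff.2 (Or.inl ⟨hθ0, hcβ.le⟩)
      · intro x
        have key : ∀ α, Real.exp (-(dot xs (α - β))) * Real.exp (dot x α)
            = Real.exp (dot (x - xs) (α - β)) * Real.exp (dot x β) := by
          intro α
          rw [← Real.exp_add, ← Real.exp_add]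
          congr 1
          simp only [dot_sub_left, dot_sub_right]
          ring
        have hsum_eq : (∑ α ∈ S, θ i * (lam i α * (t * Real.exp (-(dot xs (α - β)))))
              * Real.exp (dot x α))
            = θ i * t * ((∑ α ∈ S, lam i α * Real.exp (dot (x - xs) (α - β)))
              * Real.exp (dot x β)) := by
          rw [Finset.sum_mul, Finset.mul_sum]
          refine Finset.sum_congr rfl fun α hα => ?_
          rw [show θ i * (lam i α * (t * Real.exp (-(dot xs (α - β))))) * Real.exp (dot x α)
              = θ i * t * (lam i α * (Real.exp (-(dot xs (α - β))) * Real.exp (dot x α)))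
              from by ring, key α]
          ring
        have hjensen : (1:ℝ) ≤ ∑ α ∈ S, lam i α * Real.exp (dot (x - xs) (α - β)) := by
          have h1 : ∀ α ∈ S, lam i α * (1 + dot (x - xs) (α - β))
              ≤ lam i α * Real.exp (dot (x - xs) (α - β)) := by
            intro α hα
            refine mul_le_mul_of_nonneg_left ?_ (hlam0 α (hSsub hα))
            linarith [Real.add_one_le_exp (dot (x - xs) (α - β))]
          have hzero : (∑ α ∈ S, lam i α • (α - β)) = 0 := by
            rw [Finset.sum_congr rfl (fun α _ => smul_sub (lam i α) α β),
              Finset.sum_sub_distrib, hSvec, ← Finset.sum_smul, hSsum, one_smul, sub_self]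
          have h2 : (∑ α ∈ S, lam i α * (1 + dot (x - xs) (α - β))) = 1 := by
            have hterm : ∀ α ∈ S, lam i α * (1 + dot (x - xs) (α - β))
                = lam i α + dot (x - xs) (lam i α • (α - β)) := by
              intro α hα
              rw [dot_smul_right]
              ring
            rw [Finset.sum_congr rfl hterm, Finset.sum_add_distrib, hSsum, ← dot_sum_right,
              hzero, dot_zero_right, add_zero]
          calc (1:ℝ) = ∑ α ∈ S, lam i α * (1 + dot (x - xs) (α - β)) := h2.symm
            _ ≤ _ := Finset.sum_le_sum h1
        rw [hsum_eq]
        beta_reduce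
        have hE := Real.exp_pos (dot x β)
        nlinarith [mul_nonneg (mul_nonneg hθ0 hE.le) htc,
          mul_nonneg (mul_nonneg (mul_nonneg hθ0 htpos.le) (sub_nonneg.2 hjensen)) hE.le]
    · intro x
      have hS_to_A : ∀ i : Fin m,
          (∑ α ∈ A'.filter (fun α => lam i α ≠ 0),
              θ i * (lam i α * (t * Real.exp (-(dot xs (α - β))))) * Real.exp (dot x α))
          = ∑ α ∈ A', θ i * (lam i α * (t * Real.exp (-(dot xs (α - β))))) * Real.exp (dot x α) := by
        intro i
        refine Finset.sum_filter_of_ne ?_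
        intro α hα hne h0
        exact hne (by rw [h0]; ring)
      have hstep1 : (∑ i : Fin m, ((∑ α ∈ A'.filter (fun α => lam i α ≠ 0),
            θ i * (lam i α * (t * Real.exp (-(dot xs (α - β))))) * Real.exp (dot x α))
            + θ i * cβ * Real.exp (dot x β)))
          = (∑ α ∈ A', (∑ i : Fin m, θ i * lam i α) * (t * Real.exp (-(dot xs (α - β))))
              * Real.exp (dot x α)) + cβ * Real.exp (dot x β) := by
        rw [Finset.sum_add_distrib]
        congr 1
        · rw [Finset.sum_congr rfl (fun i _ => hS_to_A i), Finset.sum_comm]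
          refine Finset.sum_congr rfl fun α hα => ?_
          rw [Finset.sum_mul, Finset.sum_mul]
          refine Finset.sum_congr rfl fun i _ => ?_
          ring
        · rw [← Finset.sum_mul, ← Finset.sum_mul, hθsum, one_mul]
      have hcoef : ∀ α ∈ A', (∑ i : Fin m, θ i * lam i α) * (t * Real.exp (-(dot xs (α - β))))
          = c α := by
        intro α hα
        rw [← hrep α]
        simp only [hl, if_pos hα, hp]
        rw [Real.exp_neg]
        field_simp
      rw [hstep1]
      have : (∑ α ∈ A', (∑ i : Fin m, θ i * lam i α) * (t * Real.exp (-(dot xs (α - β))))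
            * Real.exp (dot x α)) = ∑ α ∈ A', c α * Real.exp (dot x α) := by
        refine Finset.sum_congr rfl fun α hα => ?_
        rw [show (∑ i : Fin m, θ i * lam i α) * (t * Real.exp (-(dot xs (α - β))))
            * Real.exp (dot x α)
            = ((∑ i : Fin m, θ i * lam i α) * (t * Real.exp (-(dot xs (α - β)))))
              * Real.exp (dot x α) from by ring, hcoef α hα]
      rw [this]
      simp
end

section
/- Let A⁺, A⁻ ⊆ ℝⁿ be disjoint finite sets with A⁺ ≠ ∅ and A⁻ ≠ ∅, and set A = A⁺ ∪ A⁻. For each β ∈ A⁻ let C^A_{(A⁺,{β})} denote the set of vectors in ℝ^A that vanish on A⁻ \ {β} and whose restriction to A⁺ ∪ {β} belongs to C_{(A⁺,{β})}. Then the signed SONC cone decomposes as a Minkowski sum: C_{(A⁺,A⁻)} = ∑_{β∈A⁻} C^A_{(A⁺,{β})}. -/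
open Finset Pointwise

/-- `C^A_{(A⁺,{β})}`: vectors on `A = A⁺ ∪ A⁻` vanishing on `A⁻ \ {β}` whose restriction to
`A⁺ ∪ {β}` lies in `C_{(A⁺,{β})}`. -/
def SAGEExt {n : ℕ} (Ap An : Finset (Fin n → ℝ)) (β : Fin n → ℝ) :
    Set ((Fin n → ℝ) → ℝ) :=
  {c | (∀ γ ∈ An, γ ≠ β → c γ = 0) ∧ InSAGE Ap {β} c}

/-- An AGE vector relative to support `S`. -/
def IsAGE {n : ℕ} (S : Finset (Fin n → ℝ)) (f : (Fin n → ℝ) → ℝ) : Prop :=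
  (∀ γ₁ ∈ S, ∀ γ₂ ∈ S, f γ₁ < 0 → f γ₂ < 0 → γ₁ = γ₂) ∧
  (∀ x : Fin n → ℝ, 0 ≤ expSum S f x)

lemma expSum_add {n : ℕ} (S : Finset (Fin n → ℝ)) (v w : (Fin n → ℝ) → ℝ) (x : Fin n → ℝ) :
    expSum S (v + w) x = expSum S v x + expSum S w x := by
  simp [expSum, add_mul, Finset.sum_add_distrib]

lemma expSum_smul {n : ℕ} (S : Finset (Fin n → ℝ)) (t : ℝ) (v : (Fin n → ℝ) → ℝ)
    (x : Fin n → ℝ) : expSum S (t • v) x = t * expSum S v x := by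
  simp [expSum, Finset.mul_sum, mul_assoc]

lemma expSum_zero {n : ℕ} (S : Finset (Fin n → ℝ)) (x : Fin n → ℝ) :
    expSum S (0 : (Fin n → ℝ) → ℝ) x = 0 := by simp [expSum]

lemma IsAGE_zero {n : ℕ} (S : Finset (Fin n → ℝ)) : IsAGE S (0 : (Fin n → ℝ) → ℝ) := by
  constructor
  · intro γ₁ _ γ₂ _ h1 _; simp at h1
  · intro x; simp [expSum_zero]

lemma IsAGE_smul {n : ℕ} {S : Finset (Fin n → ℝ)} {t : ℝ} (ht : 0 ≤ t)
    {f : (Fin n → ℝ) → ℝ} (hf : IsAGE S f) : IsAGE S (t • f) := by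
  constructor
  · intro γ₁ h1 γ₂ h2 hn1 hn2
    have f1 : f γ₁ < 0 := by
      by_contra h; push_neg at h
      exact absurd (mul_nonneg ht h) (by simpa using not_le.2 hn1)
    have f2 : f γ₂ < 0 := by
      by_contra h; push_neg at h
      exact absurd (mul_nonneg ht h) (by simpa using not_le.2 hn2)
    exact hf.1 γ₁ h1 γ₂ h2 f1 f2
  · intro x; rw [expSum_smul]; exact mul_nonneg ht (hf.2 x)

/-- The merge lemma: combine a piece positive at `γ₀` with a piece negative at `γ₀`. -/
lemma merge_lemma {n : ℕ} {S : Finset (Fin n → ℝ)} {γ₀ : Fin n → ℝ} (hγ₀ : γ₀ ∈ S)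
    {f g : (Fin n → ℝ) → ℝ} (hf : IsAGE S f) (hg : IsAGE S g)
    (hfp : 0 < f γ₀) (hgn : g γ₀ < 0) :
    ∃ h₁ h₂ : (Fin n → ℝ) → ℝ, h₁ + h₂ = f + g ∧ IsAGE S h₁ ∧ IsAGE S h₂ ∧ h₁ γ₀ = 0 ∧
      (∃ a b : ℝ, 0 ≤ a ∧ 0 ≤ b ∧ h₁ = a • f + b • g) ∧
      (∃ t : ℝ, 0 ≤ t ∧ (h₂ = t • f ∨ h₂ = t • g)) := by
  have hgneg : ∀ γ ∈ S, g γ < 0 → γ = γ₀ := fun γ hγ hn => hg.1 γ hγ γ₀ hγ₀ hn hgn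
  have hq : 0 < -g γ₀ := by linarith
  by_cases hpq : f γ₀ ≤ -g γ₀
  · set lam : ℝ := f γ₀ / (-g γ₀) with hlam
    have hlam0 : 0 ≤ lam := div_nonneg hfp.le hq.le
    have hlam1 : lam ≤ 1 := (div_le_one hq).2 hpq
    refine ⟨f + lam • g, (1 - lam) • g, ?_, ?_, IsAGE_smul (by linarith) hg, ?_, ?_, ?_⟩
    · funext x; simp [Pi.add_apply, Pi.smul_apply, smul_eq_mul]; ring
    · constructor
      · intro γ₁ h1 γ₂ h2 hn1 hn2
        have key : ∀ γ ∈ S, (f + lam • g) γ < 0 → f γ < 0 := by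
          intro γ hγ hn
          by_contra h; push_neg at h
          have : g γ < 0 := by
            by_contra h2; push_neg at h2
            have : 0 ≤ f γ + lam * g γ := by positivity
            simp [Pi.add_apply, Pi.smul_apply, smul_eq_mul] at hn; linarith
          have hγeq : γ = γ₀ := hgneg γ hγ this
          rw [hγeq] at hn
          have : (f + lam • g) γ₀ = 0 := by
            simp [Pi.add_apply, Pi.smul_apply, smul_eq_mul, hlam]
            field_simp
            rw [div_self (ne_of_lt hgn)]; ring
          linarith [hn, this.ge]
        exact hf.1 γ₁ h1 γ₂ h2 (key γ₁ h1 hn1) (key γ₂ h2 hn2)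
      · intro x
        rw [expSum_add, expSum_smul]
        have := hf.2 x; have := hg.2 x; positivity
    · simp [Pi.add_apply, Pi.smul_apply, smul_eq_mul, hlam]; field_simp
      rw [div_self (ne_of_lt hgn)]; ring
    · exact ⟨1, lam, by norm_num, hlam0, by funext x; simp⟩
    · exact ⟨1 - lam, by linarith, Or.inr rfl⟩
  · push_neg at hpq
    set mu : ℝ := (-g γ₀) / f γ₀ with hmu
    have hmu0 : 0 ≤ mu := div_nonneg hq.le hfp.le
    have hmu1 : mu ≤ 1 := (div_le_one hfp).2 hpq.le
    refine ⟨mu • f + g, (1 - mu) • f, ?_, ?_, IsAGE_smul (by linarith) hf, ?_, ?_, ?_⟩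
    · funext x; simp [Pi.add_apply, Pi.smul_apply, smul_eq_mul]; ring
    · constructor
      · intro γ₁ h1 γ₂ h2 hn1 hn2
        have key : ∀ γ ∈ S, (mu • f + g) γ < 0 → f γ < 0 := by
          intro γ hγ hn
          by_contra h; push_neg at h
          have : g γ < 0 := by
            by_contra h2; push_neg at h2
            have : 0 ≤ mu * f γ + g γ := by positivity
            simp [Pi.add_apply, Pi.smul_apply, smul_eq_mul] at hn; linarith
          have hγeq : γ = γ₀ := hgneg γ hγ this
          rw [hγeq] at hn
          have : (mu • f + g) γ₀ = 0 := by
            simp [Pi.add_apply, Pi.smul_apply, smul_eq_mul, hmu]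
            field_simp
            ring
          linarith [hn, this.ge]
        exact hf.1 γ₁ h1 γ₂ h2 (key γ₁ h1 hn1) (key γ₂ h2 hn2)
      · intro x
        rw [expSum_add, expSum_smul]
        have := hf.2 x; have := hg.2 x; positivity
    · simp [Pi.add_apply, Pi.smul_apply, smul_eq_mul, hmu]; field_simp
      ring
    · exact ⟨mu, 1, hmu0, by norm_num, by funext x; simp⟩
    · exact ⟨1 - mu, by linarith, Or.inl rfl⟩

lemma sum_update_two {m : ℕ} {M : Type*} [AddCommMonoid M] (d : Fin m → M) {i j : Fin m}
    (hij : i ≠ j) (a b : M) (hab : a + b = d i + d j) :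
    ∑ k, Function.update (Function.update d i a) j b k = ∑ k, d k := by
  classical
  rw [Finset.sum_update_of_mem (Finset.mem_univ j)]
  rw [Finset.sum_update_of_mem (Finset.mem_sdiff.2 ⟨Finset.mem_univ i, by simpa using hij⟩)]
  have h1 : ∑ k, d k = d j + ∑ k ∈ Finset.univ \ {j}, d k := by
    rw [← Finset.sum_update_of_mem (Finset.mem_univ j)]
    apply Finset.sum_congr rfl
    intro k _
    by_cases hk : k = j <;> simp [hk]
  have h2 : ∑ k ∈ Finset.univ \ {j}, d k = d i + ∑ k ∈ (Finset.univ \ {j}) \ {i}, d k := by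
    rw [← Finset.sum_update_of_mem (Finset.mem_sdiff.2 ⟨Finset.mem_univ i, by simpa using hij⟩)]
    apply Finset.sum_congr rfl
    intro k _
    by_cases hk : k = i <;> simp [hk]
  have h3 : b + a = d j + d i := by rw [add_comm b a, hab, add_comm]
  rw [h1, h2, ← add_assoc, ← add_assoc, h3]

/-- Inner loop for phase 1: eliminate positive entries at a point `β'` where the total is `≤ 0`. -/
lemma inner1 {n m : ℕ} {A : Finset (Fin n → ℝ)} {σ : (Fin n → ℝ) → ℝ} {β' : Fin n → ℝ}
    (hβ' : β' ∈ A) (hσβ : σ β' ≤ 0) (T : Finset (Fin n → ℝ)) :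
    ∀ k : ℕ, ∀ d : Fin m → (Fin n → ℝ) → ℝ,
      (Finset.univ.filter fun i => d i β' ≠ 0).card ≤ k →
      (∀ i, IsAGE A (d i)) → (∑ i, d i) = σ →
      (∀ β ∈ T, ∀ i, d i β ≤ 0) →
      ∃ d' : Fin m → (Fin n → ℝ) → ℝ,
        (∀ i, IsAGE A (d' i)) ∧ (∑ i, d' i) = σ ∧
        (∀ β ∈ T, ∀ i, d' i β ≤ 0) ∧ (∀ i, d' i β' ≤ 0) := by
  intro k
  induction k with
  | zero =>
    intro d hcard hage hsum hT
    refine ⟨d, hage, hsum, hT, ?_⟩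
    intro i
    have : (Finset.univ.filter fun i => d i β' ≠ 0) = ∅ := by
      apply Finset.card_eq_zero.1; omega
    have hz : d i β' = 0 := by
      by_contra h
      have hmem : i ∈ Finset.univ.filter fun i => d i β' ≠ 0 := by simp [h]
      rw [this] at hmem
      exact absurd hmem (Finset.notMem_empty i)
    exact le_of_eq hz
  | succ k ih =>
    intro d hcard hage hsum hT
    by_cases hall : ∀ i, d i β' ≤ 0
    · exact ⟨d, hage, hsum, hT, hall⟩
    push_neg at hall
    obtain ⟨i, hi⟩ := hall
    -- there is a j with d j β' < 0
    have hsumβ : ∑ l, d l β' = σ β' := by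
      rw [← hsum]; simp [Finset.sum_apply]
    have hexj : ∃ j, d j β' < 0 := by
      by_contra h; push_neg at h
      have h1 : d i β' ≤ ∑ l, d l β' :=
        Finset.single_le_sum (fun l _ => h l) (Finset.mem_univ i)
      linarith
    obtain ⟨j, hj⟩ := hexj
    have hij : i ≠ j := fun h => by rw [h] at hi; linarith
    obtain ⟨h₁, h₂, hsum2, hage1, hage2, hzero, ⟨a, b, ha, hb, hform⟩, ⟨t, ht, hform2⟩⟩ :=
      merge_lemma hβ' (hage i) (hage j) hi hj
    set d' := Function.update (Function.update d i h₁) j h₂ with hd'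
    have hd'i : d' i = h₁ := by
      simp [hd', Function.update_apply, hij]
    have hd'j : d' j = h₂ := by simp [hd']
    have hd'o : ∀ l, l ≠ i → l ≠ j → d' l = d l := by
      intro l hli hlj
      simp [hd', Function.update_apply, hli, hlj]
    have hage' : ∀ l, IsAGE A (d' l) := by
      intro l
      by_cases hl : l = j
      · rw [hl, hd'j]; exact hage2
      by_cases hl2 : l = i
      · rw [hl2, hd'i]; exact hage1
      · rw [hd'o l hl2 hl]; exact hage l
    have hsum' : (∑ l, d' l) = σ := by
      rw [hd', sum_update_two d hij h₁ h₂ hsum2, hsum]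
    have hT' : ∀ β ∈ T, ∀ l, d' l β ≤ 0 := by
      intro β hβ l
      by_cases hl : l = j
      · rw [hl, hd'j]
        rcases hform2 with h | h <;> rw [h] <;>
          simp [Pi.smul_apply, smul_eq_mul] <;>
          [exact mul_nonpos_of_nonneg_of_nonpos ht (hT β hβ i);
           exact mul_nonpos_of_nonneg_of_nonpos ht (hT β hβ j)]
      by_cases hl2 : l = i
      · rw [hl2, hd'i, hform]
        simp only [Pi.add_apply, Pi.smul_apply, smul_eq_mul]
        have := hT β hβ i; have := hT β hβ j
        nlinarith
      · rw [hd'o l hl2 hl]; exact hT β hβ l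
    have hcard' : (Finset.univ.filter fun l => d' l β' ≠ 0).card ≤ k := by
      have hsub : (Finset.univ.filter fun l => d' l β' ≠ 0) ⊆
          (Finset.univ.filter fun l => d l β' ≠ 0).erase i := by
        intro l hl
        simp only [Finset.mem_filter, Finset.mem_univ, true_and] at hl
        rw [Finset.mem_erase]
        constructor
        · intro hli
          rw [hli, hd'i, hzero] at hl; exact hl rfl
        · simp only [Finset.mem_filter, Finset.mem_univ, true_and]
          by_cases hlj : l = j
          · rw [hlj]; exact ne_of_lt hj
          by_cases hli : l = i
          · rw [hli]; exact ne_of_gt hi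
          · rw [hd'o l hli hlj] at hl; exact hl
      have hmem : i ∈ (Finset.univ.filter fun l => d l β' ≠ 0) := by
        simp [ne_of_gt hi]
      calc (Finset.univ.filter fun l => d' l β' ≠ 0).card
          ≤ ((Finset.univ.filter fun l => d l β' ≠ 0).erase i).card :=
            Finset.card_le_card hsub
        _ = (Finset.univ.filter fun l => d l β' ≠ 0).card - 1 :=
            Finset.card_erase_of_mem hmem
        _ ≤ k := by omega
    exact ih d' hcard' hage' hsum' hT'

/-- Phase 1: make all entries at points of `T` nonpositive. -/
lemma phase1 {n m : ℕ} {A : Finset (Fin n → ℝ)} {σ : (Fin n → ℝ) → ℝ}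
    (T : Finset (Fin n → ℝ)) (hTA : T ⊆ A) (hσT : ∀ β ∈ T, σ β ≤ 0) :
    ∀ d : Fin m → (Fin n → ℝ) → ℝ,
      (∀ i, IsAGE A (d i)) → (∑ i, d i) = σ →
      ∃ d' : Fin m → (Fin n → ℝ) → ℝ,
        (∀ i, IsAGE A (d' i)) ∧ (∑ i, d' i) = σ ∧ (∀ β ∈ T, ∀ i, d' i β ≤ 0) := by
  classical
  induction T using Finset.induction_on with
  | empty =>
    intro d hage hsum
    exact ⟨d, hage, hsum, by simp⟩
  | @insert β' T hβ'T ih =>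
    intro d hage hsum
    have hTA' : T ⊆ A := fun x hx => hTA (Finset.mem_insert_of_mem hx)
    have hσT' : ∀ β ∈ T, σ β ≤ 0 := fun β hβ => hσT β (Finset.mem_insert_of_mem hβ)
    obtain ⟨d₁, hage1, hsum1, hT1⟩ := ih hTA' hσT' d hage hsum
    obtain ⟨d₂, hage2, hsum2, hT2, hβ'2⟩ :=
      inner1 (hTA (Finset.mem_insert_self β' T)) (hσT β' (Finset.mem_insert_self β' T)) T
        (Finset.univ.filter fun i => d₁ i β' ≠ 0).card d₁ le_rfl hage1 hsum1 hT1
    refine ⟨d₂, hage2, hsum2, ?_⟩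
    intro β hβ
    rcases Finset.mem_insert.1 hβ with h | h
    · rw [h]; exact hβ'2
    · exact hT2 β h

/-- Inner loop for phase 2: make the float entries at a point `α` all of one sign. -/
lemma inner2 {n m : ℕ} {A : Finset (Fin n → ℝ)} {σ : (Fin n → ℝ) → ℝ} {α : Fin n → ℝ}
    (hα : α ∈ A) (An : Finset (Fin n → ℝ)) (F : Finset (Fin m)) (T : Finset (Fin n → ℝ)) :
    ∀ k : ℕ, ∀ d : Fin m → (Fin n → ℝ) → ℝ,
      (F.filter fun i => d i α ≠ 0).card ≤ k →
      (∀ i, IsAGE A (d i)) → (∑ i, d i) = σ →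
      (∀ i ∈ F, ∀ β ∈ An, d i β = 0) →
      (∀ α' ∈ T, (∀ i ∈ F, d i α' ≤ 0) ∨ (∀ i ∈ F, 0 ≤ d i α')) →
      ∃ d' : Fin m → (Fin n → ℝ) → ℝ,
        (∀ i, IsAGE A (d' i)) ∧ (∑ i, d' i) = σ ∧
        (∀ i ∉ F, d' i = d i) ∧
        (∀ i ∈ F, ∀ β ∈ An, d' i β = 0) ∧
        (∀ α' ∈ T, (∀ i ∈ F, d' i α' ≤ 0) ∨ (∀ i ∈ F, 0 ≤ d' i α')) ∧
        ((∀ i ∈ F, d' i α ≤ 0) ∨ (∀ i ∈ F, 0 ≤ d' i α)) := by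
  intro k
  induction k with
  | zero =>
    intro d hcard hage hsum hF hT
    refine ⟨d, hage, hsum, fun _ _ => rfl, hF, hT, ?_⟩
    left
    intro i hiF
    have : (F.filter fun i => d i α ≠ 0) = ∅ := by apply Finset.card_eq_zero.1; omega
    have hz : d i α = 0 := by
      by_contra h
      have hmem : i ∈ F.filter fun i => d i α ≠ 0 := by simp [h, hiF]
      rw [this] at hmem
      exact absurd hmem (Finset.notMem_empty i)
    exact le_of_eq hz
  | succ k ih =>
    intro d hcard hage hsum hF hT
    by_cases hneg : ∀ i ∈ F, d i α ≤ 0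
    · exact ⟨d, hage, hsum, fun _ _ => rfl, hF, hT, Or.inl hneg⟩
    by_cases hpos : ∀ i ∈ F, 0 ≤ d i α
    · exact ⟨d, hage, hsum, fun _ _ => rfl, hF, hT, Or.inr hpos⟩
    push_neg at hneg hpos
    obtain ⟨i, hiF, hi⟩ := hneg
    obtain ⟨j, hjF, hj⟩ := hpos
    have hij : i ≠ j := fun h => by rw [h] at hi; linarith
    obtain ⟨h₁, h₂, hsum2, hage1, hage2, hzero, ⟨a, b, ha, hb, hform⟩, ⟨t, ht, hform2⟩⟩ :=
      merge_lemma hα (hage i) (hage j) hi hj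
    set d' := Function.update (Function.update d i h₁) j h₂ with hd'
    have hd'i : d' i = h₁ := by simp [hd', Function.update_apply, hij]
    have hd'j : d' j = h₂ := by simp [hd']
    have hd'o : ∀ l, l ≠ i → l ≠ j → d' l = d l := by
      intro l hli hlj; simp [hd', Function.update_apply, hli, hlj]
    have hage' : ∀ l, IsAGE A (d' l) := by
      intro l
      by_cases hl : l = j
      · rw [hl, hd'j]; exact hage2
      by_cases hl2 : l = i
      · rw [hl2, hd'i]; exact hage1
      · rw [hd'o l hl2 hl]; exact hage l
    have hsum' : (∑ l, d' l) = σ := by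
      rw [hd', sum_update_two d hij h₁ h₂ hsum2, hsum]
    have hout : ∀ l ∉ F, d' l = d l := by
      intro l hl
      exact hd'o l (fun h => hl (h ▸ hiF)) (fun h => hl (h ▸ hjF))
    have hF' : ∀ l ∈ F, ∀ β ∈ An, d' l β = 0 := by
      intro l hlF β hβ
      by_cases hl : l = j
      · rw [hl, hd'j]
        rcases hform2 with h | h <;> rw [h] <;>
          simp [Pi.smul_apply, smul_eq_mul, hF i hiF β hβ, hF j hjF β hβ]
      by_cases hl2 : l = i
      · rw [hl2, hd'i, hform]
        simp [Pi.add_apply, Pi.smul_apply, smul_eq_mul, hF i hiF β hβ, hF j hjF β hβ]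
      · rw [hd'o l hl2 hl]; exact hF l hlF β hβ
    have hkey : ∀ α' : Fin n → ℝ, ∀ l ∈ F,
        ((d i α' ≤ 0 → d j α' ≤ 0 → d l α' ≤ 0 → d' l α' ≤ 0) ∧
         (0 ≤ d i α' → 0 ≤ d j α' → 0 ≤ d l α' → 0 ≤ d' l α')) := by
      intro α' l _
      constructor
      · intro h1 h2 h3
        by_cases hl : l = j
        · rw [hl, hd'j]
          rcases hform2 with h | h <;> rw [h] <;>
            simp only [Pi.smul_apply, smul_eq_mul] <;>
            [exact mul_nonpos_of_nonneg_of_nonpos ht h1;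
             exact mul_nonpos_of_nonneg_of_nonpos ht h2]
        by_cases hl2 : l = i
        · rw [hl2, hd'i, hform]
          simp only [Pi.add_apply, Pi.smul_apply, smul_eq_mul]
          nlinarith
        · rw [hd'o l hl2 hl]; exact h3
      · intro h1 h2 h3
        by_cases hl : l = j
        · rw [hl, hd'j]
          rcases hform2 with h | h <;> rw [h] <;>
            simp only [Pi.smul_apply, smul_eq_mul] <;>
            [exact mul_nonneg ht h1; exact mul_nonneg ht h2]
        by_cases hl2 : l = i
        · rw [hl2, hd'i, hform]
          simp only [Pi.add_apply, Pi.smul_apply, smul_eq_mul]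
          nlinarith
        · rw [hd'o l hl2 hl]; exact h3
    have hT' : ∀ α' ∈ T, (∀ l ∈ F, d' l α' ≤ 0) ∨ (∀ l ∈ F, 0 ≤ d' l α') := by
      intro α' hα'
      rcases hT α' hα' with h | h
      · left; intro l hl
        exact ((hkey α' l hl).1) (h i hiF) (h j hjF) (h l hl)
      · right; intro l hl
        exact ((hkey α' l hl).2) (h i hiF) (h j hjF) (h l hl)
    have hcard' : (F.filter fun l => d' l α ≠ 0).card ≤ k := by
      have hsub : (F.filter fun l => d' l α ≠ 0) ⊆
          (F.filter fun l => d l α ≠ 0).erase i := by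
        intro l hl
        simp only [Finset.mem_filter] at hl
        rw [Finset.mem_erase]
        constructor
        · intro hli
          rw [hli, hd'i, hzero] at hl; exact hl.2 rfl
        · simp only [Finset.mem_filter]
          refine ⟨hl.1, ?_⟩
          by_cases hlj : l = j
          · rw [hlj]; exact ne_of_lt hj
          by_cases hli : l = i
          · rw [hli]; exact ne_of_gt hi
          · rw [hd'o l hli hlj] at hl; exact hl.2
      have hmem : i ∈ (F.filter fun l => d l α ≠ 0) := by
        simp [hiF, ne_of_gt hi]
      calc (F.filter fun l => d' l α ≠ 0).card
          ≤ ((F.filter fun l => d l α ≠ 0).erase i).card := Finset.card_le_card hsub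
        _ = (F.filter fun l => d l α ≠ 0).card - 1 := Finset.card_erase_of_mem hmem
        _ ≤ k := by omega
    obtain ⟨d'', p1, p2, p3, p4, p5, p6⟩ := ih d' hcard' hage' hsum' hF' hT'
    exact ⟨d'', p1, p2, fun l hl => by rw [p3 l hl, hout l hl], p4, p5, p6⟩

/-- Phase 2: make all float entries one-signed at each point of `T`. -/
lemma phase2 {n m : ℕ} {A : Finset (Fin n → ℝ)} {σ : (Fin n → ℝ) → ℝ}
    (An : Finset (Fin n → ℝ)) (F : Finset (Fin m)) (T : Finset (Fin n → ℝ)) (hTA : T ⊆ A) :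
    ∀ d : Fin m → (Fin n → ℝ) → ℝ,
      (∀ i, IsAGE A (d i)) → (∑ i, d i) = σ →
      (∀ i ∈ F, ∀ β ∈ An, d i β = 0) →
      ∃ d' : Fin m → (Fin n → ℝ) → ℝ,
        (∀ i, IsAGE A (d' i)) ∧ (∑ i, d' i) = σ ∧
        (∀ i ∉ F, d' i = d i) ∧
        (∀ i ∈ F, ∀ β ∈ An, d' i β = 0) ∧
        (∀ α ∈ T, (∀ i ∈ F, d' i α ≤ 0) ∨ (∀ i ∈ F, 0 ≤ d' i α)) := by
  classical
  induction T using Finset.induction_on with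
  | empty =>
    intro d hage hsum hF
    exact ⟨d, hage, hsum, fun _ _ => rfl, hF, by simp⟩
  | @insert α T hαT ih =>
    intro d hage hsum hF
    have hTA' : T ⊆ A := fun x hx => hTA (Finset.mem_insert_of_mem hx)
    obtain ⟨d₁, q1, q2, q3, q4, q5⟩ := ih hTA' d hage hsum hF
    obtain ⟨d₂, p1, p2, p3, p4, p5, p6⟩ :=
      inner2 (hTA (Finset.mem_insert_self α T)) An F T
        (F.filter fun i => d₁ i α ≠ 0).card d₁ le_rfl q1 q2 q4 q5
    refine ⟨d₂, p1, p2, fun l hl => by rw [p3 l hl, q3 l hl], p4, ?_⟩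
    intro α' hα'
    rcases Finset.mem_insert.1 hα' with h | h
    · rw [h]; exact p6
    · exact p5 α' h

lemma mem_sum_sets {ι V : Type*} [AddCommMonoid V] (s : Finset ι) (S : ι → Set V)
    (g : ι → V) (h : ∀ i ∈ s, g i ∈ S i) : (∑ i ∈ s, g i) ∈ ∑ i ∈ s, S i := by
  classical
  induction s using Finset.induction_on with
  | empty => simp
  | @insert a s ha ih =>
    rw [Finset.sum_insert ha, Finset.sum_insert ha]
    exact Set.add_mem_add (h a (Finset.mem_insert_self a s))
      (ih fun i hi => h i (Finset.mem_insert_of_mem hi))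

lemma mem_sum_sets_elim {ι V : Type*} [AddCommMonoid V] (s : Finset ι) (S : ι → Set V)
    (c : V) (h : c ∈ ∑ i ∈ s, S i) :
    ∃ g : ι → V, (∀ i ∈ s, g i ∈ S i) ∧ (∑ i ∈ s, g i) = c := by
  classical
  induction s using Finset.induction_on generalizing c with
  | empty =>
    refine ⟨fun _ => 0, by simp, ?_⟩
    simpa using (by simpa using h : c = 0).symm
  | @insert a s ha ih =>
    rw [Finset.sum_insert ha] at h
    obtain ⟨u, hu, v, hv, huv⟩ := Set.mem_add.1 h
    obtain ⟨g, hg, hgsum⟩ := ih v hv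
    refine ⟨fun i => if i = a then u else g i, ?_, ?_⟩
    · intro i hi
      rcases Finset.mem_insert.1 hi with rfl | hi'
      · simp [hu]
      · have : i ≠ a := fun hia => ha (hia ▸ hi')
        simp [this, hg i hi']
    · rw [Finset.sum_insert ha,
        Finset.sum_congr rfl (fun i hi => if_neg (fun hia : i = a => ha (hia ▸ hi))), hgsum]
      simpa using huv

lemma InSAGE_zero {n : ℕ} (Ap An : Finset (Fin n → ℝ)) : InSAGE Ap An 0 := by
  refine ⟨by simp, by simp, 0, fun _ => 0, by simp, by simp, ?_⟩
  intro i x; simp [expSum_zero]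

lemma InSAGE_add {n : ℕ} {Ap An : Finset (Fin n → ℝ)} {c₁ c₂ : (Fin n → ℝ) → ℝ}
    (h₁ : InSAGE Ap An c₁) (h₂ : InSAGE Ap An c₂) : InSAGE Ap An (c₁ + c₂) := by
  obtain ⟨hp1, hn1, m₁, d₁, hs1, hu1, he1⟩ := h₁
  obtain ⟨hp2, hn2, m₂, d₂, hs2, hu2, he2⟩ := h₂
  refine ⟨fun α hα => add_nonneg (hp1 α hα) (hp2 α hα),
    fun β hβ => add_nonpos (hn1 β hβ) (hn2 β hβ),
    m₁ + m₂, Fin.addCases d₁ d₂, ?_, ?_, ?_⟩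
  · intro γ hγ
    rw [Fin.sum_univ_add]
    simp only [Fin.addCases_left, Fin.addCases_right]
    rw [Pi.add_apply, hs1 γ hγ, hs2 γ hγ]
  · intro i
    refine Fin.addCases ?_ ?_ i
    · intro i'; simpa [Fin.addCases_left] using hu1 i'
    · intro i'; simpa [Fin.addCases_right] using hu2 i'
  · intro i
    refine Fin.addCases ?_ ?_ i
    · intro i'; simpa [Fin.addCases_left] using he1 i'
    · intro i'; simpa [Fin.addCases_right] using he2 i'

lemma InSAGE_sum {n : ℕ} {Ap An : Finset (Fin n → ℝ)} {ι : Type*} (s : Finset ι)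
    (g : ι → (Fin n → ℝ) → ℝ) (h : ∀ i ∈ s, InSAGE Ap An (g i)) :
    InSAGE Ap An (∑ i ∈ s, g i) := by
  classical
  induction s using Finset.induction_on with
  | empty => simpa using InSAGE_zero Ap An
  | @insert a s ha ih =>
    rw [Finset.sum_insert ha]
    exact InSAGE_add (h a (Finset.mem_insert_self a s))
      (ih fun i hi => h i (Finset.mem_insert_of_mem hi))

/-- Lift a member of `C_{(A⁺,{β})}` vanishing on `A⁻ \ {β}` into `C_{(A⁺,A⁻)}`. -/
lemma sageExt_lift {n : ℕ} {Ap An : Finset (Fin n → ℝ)} {β : Fin n → ℝ}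
    (hβ : β ∈ An) (hdisj : Disjoint Ap An) {c : (Fin n → ℝ) → ℝ}
    (hvan : ∀ γ ∈ An, γ ≠ β → c γ = 0) (hc : InSAGE Ap {β} c) : InSAGE Ap An c := by
  classical
  obtain ⟨hp, hn, m, d, hs, hu, he⟩ := hc
  have hsub : Ap ∪ {β} ⊆ Ap ∪ An := by
    apply Finset.union_subset_union_right
    simpa using hβ
  set r : Fin m → (Fin n → ℝ) → ℝ :=
    fun i γ => if γ ∈ Ap ∪ ({β} : Finset (Fin n → ℝ)) then d i γ else 0 with hr
  have hrval : ∀ i γ, γ ∈ Ap ∪ ({β} : Finset (Fin n → ℝ)) → r i γ = d i γ :=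
    fun i γ h => if_pos h
  have hrval0 : ∀ i γ, γ ∉ Ap ∪ ({β} : Finset (Fin n → ℝ)) → r i γ = 0 :=
    fun i γ h => if_neg h
  refine ⟨hp, ?_, m, r, ?_, ?_, ?_⟩
  · intro β' hβ'
    by_cases hb : β' = β
    · rw [hb]; exact hn β (Finset.mem_singleton_self β)
    · exact le_of_eq (hvan β' hβ' hb)
  · intro γ hγ
    by_cases hmem : γ ∈ Ap ∪ ({β} : Finset (Fin n → ℝ))
    · rw [hs γ hmem]
      apply Finset.sum_congr rfl
      intro i _
      exact (hrval i γ hmem).symm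
    · have hγAn : γ ∈ An := by
        rcases Finset.mem_union.1 hγ with h | h
        · exact absurd (Finset.mem_union_left _ h) hmem
        · exact h
      have hγβ : γ ≠ β := by
        intro h
        exact hmem (Finset.mem_union_right _ (by simp [h]))
      rw [hvan γ hγAn hγβ]
      symm
      apply Finset.sum_eq_zero
      intro i _
      exact hrval0 i γ hmem
  · intro i γ₁ hγ₁ γ₂ hγ₂ h1 h2
    by_cases m1 : γ₁ ∈ Ap ∪ ({β} : Finset (Fin n → ℝ))
    · by_cases m2 : γ₂ ∈ Ap ∪ ({β} : Finset (Fin n → ℝ))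
      · rw [hrval i γ₁ m1] at h1
        rw [hrval i γ₂ m2] at h2
        exact hu i γ₁ m1 γ₂ m2 h1 h2
      · rw [hrval0 i γ₂ m2] at h2; linarith
    · rw [hrval0 i γ₁ m1] at h1; linarith
  · intro i x
    have : expSum (Ap ∪ An) (r i) x = expSum (Ap ∪ {β}) (d i) x := by
      unfold expSum
      rw [← Finset.sum_subset hsub]
      · apply Finset.sum_congr rfl
        intro γ hγ
        rw [hrval i γ hγ]
      · intro γ _ hγ
        rw [hrval0 i γ hγ, zero_mul]
    rw [this]
    exact he i x

lemma assemble {n : ℕ} {Ap An : Finset (Fin n → ℝ)} (hdisj : Disjoint Ap An)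
    (hAn : An.Nonempty) {c : (Fin n → ℝ) → ℝ} (hc : InSAGE Ap An c) :
    ∃ g : (Fin n → ℝ) → (Fin n → ℝ) → ℝ,
      (∀ β ∈ An, (∀ γ ∈ An, γ ≠ β → g β γ = 0) ∧ InSAGE Ap {β} (g β)) ∧
      (∑ β ∈ An, g β) = c := by
  classical
  obtain ⟨hcp, hcn, m, d₀, hsum0, hneg0, hpos0⟩ := hc
  set A := Ap ∪ An with hA
  have hage0 : ∀ i, IsAGE A (d₀ i) := fun i => ⟨hneg0 i, hpos0 i⟩
  set σ : (Fin n → ℝ) → ℝ := ∑ i, d₀ i with hσdef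
  have hσA : ∀ γ ∈ A, σ γ = c γ := by
    intro γ hγ
    rw [hσdef, Finset.sum_apply]
    exact (hsum0 γ hγ).symm
  have hAnA : An ⊆ A := Finset.subset_union_right
  have hApA : Ap ⊆ A := Finset.subset_union_left
  have hσAn : ∀ β ∈ An, σ β ≤ 0 := fun β hβ => (hσA β (hAnA hβ)) ▸ hcn β hβ
  obtain ⟨d₁, hage1, hsum1, hAn1⟩ := phase1 An hAnA hσAn d₀ hage0 rfl
  set F : Finset (Fin m) := Finset.univ.filter (fun i => ∀ β ∈ An, d₁ i β = 0) with hFdef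
  have hF1 : ∀ i ∈ F, ∀ β ∈ An, d₁ i β = 0 := by
    intro i hi
    simpa [hFdef] using hi
  obtain ⟨d₂, hage2, hsum2, hout, hF2, hsign⟩ := phase2 An F Ap hApA d₁ hage1 hsum1 hF1
  have hAn2 : ∀ i, ∀ β ∈ An, d₂ i β ≤ 0 := by
    intro i β hβ
    by_cases hiF : i ∈ F
    · exact le_of_eq (hF2 i hiF β hβ)
    · rw [hout i hiF]; exact hAn1 β hβ i
  have hnotF : ∀ i ∉ F, ∃ β ∈ An, d₂ i β < 0 := by
    intro i hi
    have h1 : ¬ (∀ β ∈ An, d₁ i β = 0) := by simpa [hFdef] using hi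
    push_neg at h1
    obtain ⟨β, hβ, hne⟩ := h1
    exact ⟨β, hβ, by rw [hout i hi]; exact lt_of_le_of_ne (hAn1 β hβ i) hne⟩
  have huniq : ∀ i, ∀ γ₁ ∈ A, ∀ γ₂ ∈ A, d₂ i γ₁ < 0 → d₂ i γ₂ < 0 → γ₁ = γ₂ :=
    fun i => (hage2 i).1
  have hdiff : ∀ α ∈ Ap, ∀ β ∈ An, α ≠ β := by
    intro α hα β hβ h
    exact (Finset.disjoint_left.1 hdisj hα) (h ▸ hβ)
  have hApnn : ∀ i, ∀ β ∈ An, d₂ i β < 0 → ∀ α ∈ Ap, 0 ≤ d₂ i α := by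
    intro i β hβ hneg α hα
    by_contra h
    push_neg at h
    exact hdiff α hα β hβ (huniq i α (hApA hα) β (hAnA hβ) h hneg)
  set G : (Fin n → ℝ) → Finset (Fin m) := fun β => Finset.univ.filter (fun i => d₂ i β < 0)
    with hGdef
  set anch : (Fin n → ℝ) → (Fin n → ℝ) → ℝ := fun β => ∑ i ∈ G β, d₂ i with hanchdef
  have hanchapp : ∀ β γ, anch β γ = ∑ i ∈ G β, d₂ i γ := by
    intro β γ
    rw [hanchdef]
    simp [Finset.sum_apply]
  have hGmem : ∀ β i, i ∈ G β ↔ d₂ i β < 0 := by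
    intro β i; simp [hGdef]
  have hanchAp : ∀ β ∈ An, ∀ α ∈ Ap, 0 ≤ anch β α := by
    intro β hβ α hα
    rw [hanchapp]
    apply Finset.sum_nonneg
    intro i hi
    exact hApnn i β hβ ((hGmem β i).1 hi) α hα
  have hsumσ : ∀ γ, σ γ = ∑ i, d₂ i γ := by
    intro γ
    rw [← hsum2, Finset.sum_apply]
  have hanchβ : ∀ β ∈ An, anch β β = σ β := by
    intro β hβ
    rw [hanchapp, hsumσ]
    apply Finset.sum_subset (Finset.subset_univ _)
    intro i _ hi
    exact le_antisymm (hAn2 i β hβ) (not_lt.1 (fun h => hi ((hGmem β i).2 h) : ¬ d₂ i β < 0))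
  have hanchO : ∀ β ∈ An, ∀ β' ∈ An, β' ≠ β → anch β β' = 0 := by
    intro β hβ β' hβ' hne
    rw [hanchapp]
    apply Finset.sum_eq_zero
    intro i hi
    rcases lt_or_eq_of_le (hAn2 i β' hβ') with hlt | heq
    · exact absurd (huniq i β' (hAnA hβ') β (hAnA hβ) hlt ((hGmem β i).1 hi)) hne
    · exact heq
  set Anch : (Fin n → ℝ) → ℝ := fun γ => ∑ β ∈ An, anch β γ with hAnchdef
  set FS : (Fin n → ℝ) → ℝ := fun γ => ∑ i ∈ F, d₂ i γ with hFSdef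
  have hsplit : ∀ γ, Anch γ + FS γ = σ γ := by
    intro γ
    have h1 : Anch γ = ∑ i, (if i ∈ F then 0 else d₂ i γ) := by
      simp only [hAnchdef]
      have h2 : ∀ β ∈ An, anch β γ = ∑ i, (if d₂ i β < 0 then d₂ i γ else 0) := by
        intro β _
        rw [hanchapp, hGdef]
        exact Finset.sum_filter _ _
      rw [Finset.sum_congr rfl h2, Finset.sum_comm]
      apply Finset.sum_congr rfl
      intro i _
      by_cases hiF : i ∈ F
      · rw [if_pos hiF]
        apply Finset.sum_eq_zero
        intro β hβ
        rw [if_neg]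
        rw [hF2 i hiF β hβ]
        exact lt_irrefl 0
      · rw [if_neg hiF]
        obtain ⟨β', hβ', hneg⟩ := hnotF i hiF
        rw [Finset.sum_eq_single_of_mem β' hβ']
        · rw [if_pos hneg]
        · intro β hβ hne
          rw [if_neg]
          intro h
          exact hne (huniq i β (hAnA hβ) β' (hAnA hβ') h hneg)
    have h3 : FS γ = ∑ i, (if i ∈ F then d₂ i γ else 0) := by
      simp only [hFSdef]
      rw [Finset.sum_ite_mem, Finset.univ_inter]
    rw [h1, h3, ← Finset.sum_add_distrib, hsumσ]
    apply Finset.sum_congr rfl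
    intro i _
    by_cases hiF : i ∈ F <;> simp [hiF]
  obtain ⟨β₀, hβ₀⟩ := hAn
  set w : Fin m → (Fin n → ℝ) → ℝ := fun i β =>
    if h : ∃ α ∈ Ap, d₂ i α < 0 then anch β h.choose / Anch h.choose
    else (if β = β₀ then 1 else 0) with hwdef
  have hfloatkey : ∀ α ∈ Ap, ∀ i ∈ F, d₂ i α < 0 →
      (∀ j ∈ F, d₂ j α ≤ 0) ∧ 0 < Anch α := by
    intro α hα i hi hneg
    have hallneg : ∀ j ∈ F, d₂ j α ≤ 0 := by
      rcases hsign α hα with h | h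
      · exact h
      · linarith [h i hi]
    refine ⟨hallneg, ?_⟩
    have h1 : FS α ≤ d₂ i α := by
      simp only [hFSdef]
      have h2 : ∑ j ∈ F.erase i, d₂ j α + d₂ i α = ∑ j ∈ F, d₂ j α :=
        Finset.sum_erase_add F _ hi
      have h3 : ∑ j ∈ F.erase i, d₂ j α ≤ 0 :=
        Finset.sum_nonpos (fun j hj => hallneg j (Finset.mem_of_mem_erase hj))
      linarith
    have h2 : 0 ≤ σ α := (hσA α (hApA hα)) ▸ hcp α hα
    have h3 := hsplit α
    linarith
  have hwval : ∀ i, ∀ α ∈ Ap, d₂ i α < 0 → ∀ β, w i β = anch β α / Anch α := by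
    intro i α hα hneg β
    have hex : ∃ α' ∈ Ap, d₂ i α' < 0 := ⟨α, hα, hneg⟩
    have h1 : w i β = anch β hex.choose / Anch hex.choose := by
      rw [hwdef]
      exact dif_pos hex
    have h2 : hex.choose = α :=
      huniq i hex.choose (hApA hex.choose_spec.1) α (hApA hα) hex.choose_spec.2 hneg
    rw [h1, h2]
  have hw0 : ∀ i ∈ F, ∀ β ∈ An, 0 ≤ w i β := by
    intro i hi β hβ
    by_cases hex : ∃ α ∈ Ap, d₂ i α < 0
    · obtain ⟨α, hα, hneg⟩ := hex
      rw [hwval i α hα hneg β]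
      exact div_nonneg (hanchAp β hβ α hα) (le_of_lt (hfloatkey α hα i hi hneg).2)
    · have h1 : w i β = if β = β₀ then 1 else 0 := by
        rw [hwdef]; exact dif_neg hex
      rw [h1]
      split_ifs <;> norm_num
  have hwsum1 : ∀ i ∈ F, ∑ β ∈ An, w i β = 1 := by
    intro i hi
    by_cases hex : ∃ α ∈ Ap, d₂ i α < 0
    · obtain ⟨α, hα, hneg⟩ := hex
      have hpos := (hfloatkey α hα i hi hneg).2
      calc ∑ β ∈ An, w i β = ∑ β ∈ An, anch β α / Anch α :=
            Finset.sum_congr rfl (fun β _ => hwval i α hα hneg β)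
        _ = (∑ β ∈ An, anch β α) / Anch α := by rw [Finset.sum_div]
        _ = Anch α / Anch α := by simp only [hAnchdef]
        _ = 1 := div_self (ne_of_gt hpos)
    · calc ∑ β ∈ An, w i β = ∑ β ∈ An, if β = β₀ then (1:ℝ) else 0 :=
            Finset.sum_congr rfl (fun β _ => by rw [hwdef]; exact dif_neg hex)
        _ = 1 := by rw [Finset.sum_ite_eq' An β₀ (fun _ => (1:ℝ))]; simp [hβ₀]
  set g0 : (Fin n → ℝ) → (Fin n → ℝ) → ℝ := fun β => anch β + ∑ i ∈ F, w i β • d₂ i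
    with hg0def
  have hg0app : ∀ β γ, g0 β γ = anch β γ + ∑ i ∈ F, w i β * d₂ i γ := by
    intro β γ
    simp only [hg0def, Pi.add_apply, Finset.sum_apply, Pi.smul_apply, smul_eq_mul]
  have hg0Ap : ∀ β ∈ An, ∀ α ∈ Ap, 0 ≤ g0 β α := by
    intro β hβ α hα
    by_cases hFneg : ∃ i ∈ F, d₂ i α < 0
    · obtain ⟨i0, hi0, hneg0'⟩ := hFneg
      obtain ⟨hallneg, hpos⟩ := hfloatkey α hα i0 hi0 hneg0'
      have hterm : ∀ i ∈ F, w i β * d₂ i α = (anch β α / Anch α) * d₂ i α := by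
        intro i hi
        rcases lt_or_eq_of_le (hallneg i hi) with hlt | heq
        · rw [hwval i α hα hlt β]
        · rw [heq]; ring
      have hsumterm : ∑ i ∈ F, w i β * d₂ i α = (anch β α / Anch α) * FS α := by
        simp only [hFSdef]
        rw [Finset.mul_sum]
        exact Finset.sum_congr rfl hterm
      have hAF : Anch α + FS α = σ α := hsplit α
      have hσnn : 0 ≤ σ α := (hσA α (hApA hα)) ▸ hcp α hα
      rw [hg0app, hsumterm]
      have hAnn : 0 ≤ anch β α := hanchAp β hβ α hα
      have key : anch β α + anch β α / Anch α * FS α = (anch β α / Anch α) * σ α := by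
        rw [← hAF]
        field_simp
      rw [key]
      exact mul_nonneg (div_nonneg hAnn hpos.le) hσnn
    · push_neg at hFneg
      rw [hg0app]
      apply add_nonneg (hanchAp β hβ α hα)
      apply Finset.sum_nonneg
      intro i hi
      exact mul_nonneg (hw0 i hi β hβ) (hFneg i hi)
  have hg0β : ∀ β ∈ An, g0 β β = σ β := by
    intro β hβ
    rw [hg0app, hanchβ β hβ]
    have h1 : ∑ i ∈ F, w i β * d₂ i β = 0 :=
      Finset.sum_eq_zero (fun i hi => by rw [hF2 i hi β hβ, mul_zero])
    rw [h1, add_zero]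
  have hg0O : ∀ β ∈ An, ∀ γ ∈ An, γ ≠ β → g0 β γ = 0 := by
    intro β hβ γ hγ hne
    rw [hg0app, hanchO β hβ γ hγ hne]
    have h1 : ∑ i ∈ F, w i β * d₂ i γ = 0 :=
      Finset.sum_eq_zero (fun i hi => by rw [hF2 i hi γ hγ, mul_zero])
    rw [h1, add_zero]
  have hg0sum : ∑ β ∈ An, g0 β = σ := by
    simp only [hg0def]
    rw [Finset.sum_add_distrib, Finset.sum_comm]
    have h1 : ∀ i ∈ F, ∑ β ∈ An, w i β • d₂ i = d₂ i := by
      intro i hi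
      rw [← Finset.sum_smul, hwsum1 i hi, one_smul]
    rw [Finset.sum_congr rfl h1]
    funext γ
    rw [Pi.add_apply, Finset.sum_apply, Finset.sum_apply]
    exact hsplit γ
  have hsubβ : ∀ β ∈ An, Ap ∪ ({β} : Finset (Fin n → ℝ)) ⊆ A := by
    intro β hβ
    rw [hA]
    apply Finset.union_subset_union_right
    simpa using hβ
  have hmain : ∀ β ∈ An, InSAGE Ap {β} (g0 β) := by
    intro β hβ
    set e : Fin m → (Fin n → ℝ) → ℝ :=
      fun i => if d₂ i β < 0 then d₂ i else if i ∈ F then w i β • d₂ i else 0 with hedef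
    have heage : ∀ i, IsAGE A (e i) := by
      intro i
      simp only [hedef]
      by_cases h1 : d₂ i β < 0
      · rw [if_pos h1]; exact hage2 i
      · rw [if_neg h1]
        by_cases h2 : i ∈ F
        · rw [if_pos h2]; exact IsAGE_smul (hw0 i h2 β hβ) (hage2 i)
        · rw [if_neg h2]; exact IsAGE_zero A
    have hesum : ∑ i, e i = g0 β := by
      have hper : ∀ i, e i = (if d₂ i β < 0 then d₂ i else 0) +
          (if i ∈ F then w i β • d₂ i else 0) := by
        intro i
        simp only [hedef]
        by_cases h1 : d₂ i β < 0
        · have hiF : i ∉ F := fun hiF => absurd (hF2 i hiF β hβ) (ne_of_lt h1)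
          rw [if_pos h1, if_pos h1, if_neg hiF, add_zero]
        · rw [if_neg h1, if_neg h1, zero_add]
      rw [Finset.sum_congr rfl (fun i _ => hper i), Finset.sum_add_distrib]
      simp only [hg0def]
      congr 1
      · simp only [hanchdef, hGdef]
        exact (Finset.sum_filter _ _).symm
      · rw [Finset.sum_ite_mem, Finset.univ_inter]
    have hezero : ∀ i, ∀ γ ∈ A, γ ∉ Ap ∪ ({β} : Finset (Fin n → ℝ)) → e i γ = 0 := by
      intro i γ hγA hγn
      have hγAn : γ ∈ An := by
        rcases Finset.mem_union.1 hγA with h | h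
        · exact absurd (Finset.mem_union_left _ h) hγn
        · exact h
      have hγβ : γ ≠ β := fun h => hγn (Finset.mem_union_right _ (by simp [h]))
      simp only [hedef]
      by_cases h1 : d₂ i β < 0
      · rw [if_pos h1]
        rcases lt_or_eq_of_le (hAn2 i γ hγAn) with hlt | heq
        · exact absurd (huniq i γ (hAnA hγAn) β (hAnA hβ) hlt h1) hγβ
        · exact heq
      · rw [if_neg h1]
        by_cases h2 : i ∈ F
        · rw [if_pos h2, Pi.smul_apply, hF2 i h2 γ hγAn, smul_zero]
        · rw [if_neg h2, Pi.zero_apply]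
    refine ⟨fun α hα => hg0Ap β hβ α hα, ?_, m, e, ?_, ?_, ?_⟩
    · intro β'' hβ''
      rw [Finset.mem_singleton.1 hβ'', hg0β β hβ]
      exact hσAn β hβ
    · intro γ _
      rw [← hesum, Finset.sum_apply]
    · intro i γ₁ hγ₁ γ₂ hγ₂ h1 h2
      exact (heage i).1 γ₁ (hsubβ β hβ hγ₁) γ₂ (hsubβ β hβ hγ₂) h1 h2
    · intro i x
      have hcongr : expSum (Ap ∪ {β}) (e i) x = expSum A (e i) x := by
        unfold expSum
        apply Finset.sum_subset (hsubβ β hβ)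
        intro γ hγ hγn
        rw [hezero i γ hγ hγn, zero_mul]
      rw [hcongr]
      exact (heage i).2 x
  set gg : (Fin n → ℝ) → (Fin n → ℝ) → ℝ :=
    fun β => if β = β₀ then g0 β + (c - σ) else g0 β with hggdef
  have hagree : ∀ β, ∀ γ ∈ A, gg β γ = g0 β γ := by
    intro β γ hγ
    simp only [hggdef]
    by_cases h : β = β₀
    · rw [if_pos h, Pi.add_apply, Pi.sub_apply, hσA γ hγ, sub_self, add_zero]
    · rw [if_neg h]
  refine ⟨gg, ?_, ?_⟩
  · intro β hβ
    constructor
    · intro γ hγ hne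
      rw [hagree β γ (hAnA hγ)]
      exact hg0O β hβ γ hγ hne
    · obtain ⟨p1, p2, m', e', q1, q2, q3⟩ := hmain β hβ
      refine ⟨?_, ?_, m', e', ?_, q2, q3⟩
      · intro α hα
        rw [hagree β α (hApA hα)]
        exact p1 α hα
      · intro β'' hβ''
        rw [Finset.mem_singleton.1 hβ'', hagree β β (hAnA hβ)]
        exact p2 β (Finset.mem_singleton_self β)
      · intro γ hγ
        rw [hagree β γ (hsubβ β hβ hγ)]
        exact q1 γ hγ
  · have h1 : ∀ β ∈ An, gg β = g0 β + (if β = β₀ then c - σ else 0) := by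
      intro β _
      simp only [hggdef]
      by_cases h : β = β₀
      · rw [if_pos h, if_pos h]
      · rw [if_neg h, if_neg h, add_zero]
    rw [Finset.sum_congr rfl h1, Finset.sum_add_distrib, hg0sum,
      Finset.sum_ite_eq' An β₀ (fun _ => c - σ), if_pos hβ₀]
    abel

/-- The signed SONC cone is the Minkowski sum of the single-negative-term
cones `C^A_{(A⁺,{β})}` over `β ∈ A⁻`. -/
theorem sage_eq_minkowski_sum {n : ℕ}
    (Ap An : Finset (Fin n → ℝ)) (hdisj : Disjoint Ap An)
    (hAp : Ap.Nonempty) (hAn : An.Nonempty) :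
    {c : (Fin n → ℝ) → ℝ | InSAGE Ap An c} = ∑ β ∈ An, SAGEExt Ap An β := by
  ext c
  simp only [Set.mem_setOf_eq]
  constructor
  · intro hc
    obtain ⟨g, hg, hsum⟩ := assemble hdisj hAn hc
    rw [← hsum]
    exact mem_sum_sets An _ g (fun β hβ => ⟨(hg β hβ).1, (hg β hβ).2⟩)
  · intro hc
    obtain ⟨g, hg, hsum⟩ := mem_sum_sets_elim An _ c hc
    rw [← hsum]
    exact InSAGE_sum An g (fun β hβ => sageExt_lift hβ hdisj (hg β hβ).1 (hg β hβ).2)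
end

section
/- Let A⁺ ⊆ ℝⁿ be a finite nonempty set, let β ∈ ℝⁿ with β ∉ A⁺, and set A = A⁺ ∪ {β}. Then the dual cone of C_{(A⁺,{β})} consists exactly of those v : A → ℝ with v_α ≥ 0 for all α ∈ A⁺ and v_β ≤ ∏_{α∈A⁺} v_α^{λ_α} for every λ ∈ Λ(A⁺,β) (real powers, with the convention 0⁰ = 1). -/
open Finset

/-- The dual cone of a set `K` of coefficient vectors on the support `A`. -/
def dualCone {n : ℕ} (A : Finset (Fin n → ℝ)) (K : Set ((Fin n → ℝ) → ℝ)) :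
    Set ((Fin n → ℝ) → ℝ) :=
  {v | ∀ c ∈ K, 0 ≤ ∑ γ ∈ A, v γ * c γ}

/-- `Λ(A⁺, β)`: barycentric coordinates of `β` with respect to `A⁺`. -/
def IsBary {n : ℕ} (Ap : Finset (Fin n → ℝ)) (β : Fin n → ℝ) (lam : (Fin n → ℝ) → ℝ) : Prop :=
  (∀ α ∈ Ap, 0 ≤ lam α) ∧ (∑ α ∈ Ap, lam α = 1) ∧ (∑ α ∈ Ap, lam α • α = β)

/-! ### Farkas' lemma infrastructure -/

section Farkas

variable {m : ℕ} {ι : Type*} [DecidableEq ι]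

/-- The conic hull of the finite family `gen` restricted to `S`. -/
def coneSet (S : Finset ι) (gen : ι → (Fin m → ℝ)) : Set (Fin m → ℝ) :=
  {x | ∃ lam : ι → ℝ, (∀ i, 0 ≤ lam i) ∧ x = ∑ α ∈ S, lam α • gen α}

lemma coneSet_mono {S T : Finset ι} (h : S ⊆ T) (gen : ι → (Fin m → ℝ)) :
    coneSet S gen ⊆ coneSet T gen := by
  rintro x ⟨lam, hlam, rfl⟩
  refine ⟨fun i => if i ∈ S then lam i else 0,
    fun i => by by_cases hiS : i ∈ S <;> simp [hiS, hlam], ?_⟩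
  have hsub : ∑ α ∈ T, (if α ∈ S then lam α else 0) • gen α
      = ∑ α ∈ S, lam α • gen α := by
    rw [← Finset.sum_subset h (fun x _ hx => by simp [hx])]
    exact Finset.sum_congr rfl fun x hx => by simp [hx]
  exact hsub.symm

lemma zero_mem_coneSet (S : Finset ι) (gen : ι → (Fin m → ℝ)) : 0 ∈ coneSet S gen :=
  ⟨0, fun i => le_refl 0, by simp⟩

lemma gen_mem_coneSet {S : Finset ι} {α : ι} (hα : α ∈ S) (gen : ι → (Fin m → ℝ)) :
    gen α ∈ coneSet S gen := by
  refine ⟨fun γ => if γ = α then 1 else 0,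
    fun i => by by_cases hia : i = α <;> simp [hia], ?_⟩
  rw [Finset.sum_eq_single α]
  · simp
  · intro b _ hne; simp [hne]
  · intro habs; exact absurd hα habs

lemma smul_mem_coneSet {S : Finset ι} {gen : ι → (Fin m → ℝ)} {x : Fin m → ℝ}
    (hx : x ∈ coneSet S gen) {r : ℝ} (hr : 0 ≤ r) : r • x ∈ coneSet S gen := by
  obtain ⟨lam, hlam, rfl⟩ := hx
  refine ⟨fun i => r * lam i, fun i => mul_nonneg hr (hlam i), ?_⟩
  rw [Finset.smul_sum]
  exact Finset.sum_congr rfl fun γ _ => by rw [smul_smul]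

lemma convex_coneSet (S : Finset ι) (gen : ι → (Fin m → ℝ)) : Convex ℝ (coneSet S gen) := by
  rintro x ⟨lx, hlx, rfl⟩ y ⟨ly, hly, rfl⟩ a b ha hb _
  refine ⟨fun i => a * lx i + b * ly i, fun i =>
    add_nonneg (mul_nonneg ha (hlx i)) (mul_nonneg hb (hly i)), ?_⟩
  rw [Finset.smul_sum, Finset.smul_sum, ← Finset.sum_add_distrib]
  exact Finset.sum_congr rfl fun γ _ => by
    rw [add_smul, smul_smul, smul_smul]

/-- Conic Carathéodory: every element of the conic hull lies in the conic hull of a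
linearly independent subfamily. -/
lemma caratheodory_coneSet (gen : ι → (Fin m → ℝ)) (S : Finset ι) :
    ∀ lam : ι → ℝ, (∀ i, 0 ≤ lam i) →
      ∃ T : Finset ι, T ⊆ S ∧ LinearIndependent ℝ (fun t : T => gen (t : ι)) ∧
        (∑ α ∈ S, lam α • gen α) ∈ coneSet T gen := by
  induction S using Finset.strongInductionOn with
  | _ S ih =>
    intro lam hlam
    by_cases hind : LinearIndependent ℝ (fun t : S => gen (t : ι))
    · exact ⟨S, le_refl _, hind, lam, hlam, rfl⟩
    · obtain ⟨g, hg0, j, hgj⟩ := Fintype.not_linearIndependent_iff.mp hind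
      set ghat : ι → ℝ := fun α => if h : α ∈ S then g ⟨α, h⟩ else 0 with hghat
      have hghatsum : ∑ α ∈ S, ghat α • gen α = 0 := by
        rw [← Finset.sum_coe_sort S (fun α => ghat α • gen α), ← hg0]
        exact Finset.sum_congr rfl fun t _ => by simp [hghat, t.2]
      obtain ⟨gg, hggsum, α₀, hα₀S, hggpos⟩ :
          ∃ gg : ι → ℝ, (∑ α ∈ S, gg α • gen α = 0) ∧ ∃ α₀ ∈ S, 0 < gg α₀ := by
        by_cases hpos : ∃ α ∈ S, 0 < ghat α
        · exact ⟨ghat, hghatsum, hpos⟩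
        · push_neg at hpos
          refine ⟨fun α => -ghat α, ?_, ⟨j, j.2, ?_⟩⟩
          · rw [← neg_eq_zero, ← Finset.sum_neg_distrib, ← hghatsum]
            exact Finset.sum_congr rfl fun γ _ => by rw [neg_smul, neg_neg]
          · have h1 : ghat (j : ι) ≤ 0 := hpos _ j.2
            have h2 : ghat (j : ι) ≠ 0 := by simpa [hghat, j.2] using hgj
            simp only [neg_pos]
            exact lt_of_le_of_ne h1 h2
      set Pos : Finset ι := S.filter (fun α => 0 < gg α) with hPos
      have hα₀Pos : α₀ ∈ Pos := Finset.mem_filter.mpr ⟨hα₀S, hggpos⟩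
      obtain ⟨a, haPos, hamin⟩ :=
        Finset.exists_min_image Pos (fun α => lam α / gg α) ⟨α₀, hα₀Pos⟩
      have haS : a ∈ S := (Finset.mem_filter.mp haPos).1
      have hga : 0 < gg a := (Finset.mem_filter.mp haPos).2
      set t : ℝ := lam a / gg a with ht
      have ht0 : 0 ≤ t := div_nonneg (hlam a) hga.le
      set lam' : ι → ℝ := fun α => if α ∈ S then lam α - t * gg α else 0 with hlam'
      have hlam'0 : ∀ i, 0 ≤ lam' i := by
        intro i
        simp only [hlam']
        split
        · rename_i hiS
          by_cases hggi : 0 < gg i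
          · have h1 : t ≤ lam i / gg i := hamin i (Finset.mem_filter.mpr ⟨hiS, hggi⟩)
            have h2 := (le_div_iff₀ hggi).mp h1
            linarith
          · push_neg at hggi
            nlinarith [hlam i]
        · exact le_refl 0
      have hlam'a : lam' a = 0 := by
        simp only [hlam', if_pos haS, ht]
        field_simp
        ring
      have hsum' : ∑ α ∈ S.erase a, lam' α • gen α = ∑ α ∈ S, lam α • gen α := by
        rw [Finset.sum_erase _ (by rw [hlam'a, zero_smul])]
        have hcongr : ∀ α ∈ S, lam' α • gen α = lam α • gen α - t • (gg α • gen α) := by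
          intro α hα
          simp only [hlam', if_pos hα]
          rw [sub_smul, smul_smul]
        rw [Finset.sum_congr rfl hcongr, Finset.sum_sub_distrib, ← Finset.smul_sum, hggsum,
          smul_zero, sub_zero]
      obtain ⟨T, hTsub, hTli, hTmem⟩ :=
        ih (S.erase a) (Finset.erase_ssubset haS) lam' hlam'0
      rw [hsum'] at hTmem
      exact ⟨T, hTsub.trans (Finset.erase_subset _ _), hTli, hTmem⟩

lemma isClosed_coneSet_of_li {T : Finset ι} {gen : ι → (Fin m → ℝ)}
    (h : LinearIndependent ℝ (fun t : T => gen (t : ι))) : IsClosed (coneSet T gen) := by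
  classical
  set Φ : (T → ℝ) →ₗ[ℝ] (Fin m → ℝ) :=
    Fintype.linearCombination ℝ (fun t : T => gen (t : ι)) with hΦ
  have hker : LinearMap.ker Φ = ⊥ := by
    rw [LinearMap.ker_eq_bot']
    intro g hg
    have hall := Fintype.linearIndependent_iff.mp h g
      (by simpa [hΦ, Fintype.linearCombination_apply] using hg)
    funext i
    exact hall i
  have hemb : Topology.IsClosedEmbedding Φ := LinearMap.isClosedEmbedding_of_injective hker
  have himg : coneSet T gen = Φ '' {g : T → ℝ | ∀ t, 0 ≤ g t} := by
    ext x
    constructor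
    · rintro ⟨lam, h0, rfl⟩
      refine ⟨fun t => lam t, fun t => h0 t, ?_⟩
      simp only [hΦ, Fintype.linearCombination_apply]
      exact Finset.sum_coe_sort T (fun α => lam α • gen α)
    · rintro ⟨g, hg, rfl⟩
      refine ⟨fun α => if h : α ∈ T then g ⟨α, h⟩ else 0, fun i => ?_, ?_⟩
      · dsimp only
        split
        · exact hg _
        · exact le_refl 0
      · simp only [hΦ, Fintype.linearCombination_apply]
        rw [← Finset.sum_coe_sort T (fun α => (if h : α ∈ T then g ⟨α, h⟩ else 0) • gen α)]
        exact (Finset.sum_congr rfl fun t _ => by simp [t.2]).symm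
  rw [himg]
  refine hemb.isClosedMap _ ?_
  have horth : {g : T → ℝ | ∀ t, 0 ≤ g t} = ⋂ t, {g : T → ℝ | 0 ≤ g t} := by
    ext g; simp [Set.mem_iInter]
  rw [horth]
  exact isClosed_iInter fun t => isClosed_le continuous_const (continuous_apply t)

lemma isClosed_coneSet (S : Finset ι) (gen : ι → (Fin m → ℝ)) : IsClosed (coneSet S gen) := by
  have hrw : coneSet S gen = ⋃ T ∈ {T : Finset ι |
      T ⊆ S ∧ LinearIndependent ℝ (fun t : T => gen (t : ι))}, coneSet T gen := by
    ext x
    constructor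
    · rintro ⟨lam, hlam, rfl⟩
      obtain ⟨T, hTS, hli, hmem⟩ := caratheodory_coneSet gen S lam hlam
      exact Set.mem_biUnion ⟨hTS, hli⟩ hmem
    · intro hx
      obtain ⟨T, hT, hxT⟩ := Set.mem_iUnion₂.mp hx
      exact coneSet_mono hT.1 gen hxT
  rw [hrw]
  refine Set.Finite.isClosed_biUnion ?_ (fun T hT => isClosed_coneSet_of_li hT.2)
  exact Set.Finite.subset (S.powerset : Finset (Finset ι)).finite_toSet
    (fun T hT => Finset.mem_coe.mpr (Finset.mem_powerset.mpr hT.1))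

/-- Farkas' lemma (inequality form). -/
lemma farkas (S : Finset ι) (w : ι → (Fin m → ℝ)) (b : ι → ℝ)
    (h : ∀ lam : ι → ℝ, (∀ i, 0 ≤ lam i) → (∑ α ∈ S, lam α • w α) = 0 →
      0 ≤ ∑ α ∈ S, lam α * b α) :
    ∃ t : Fin m → ℝ, ∀ α ∈ S, (∑ i, t i * w α i) ≤ b α := by
  classical
  set gen : ι → (Fin (m + 1) → ℝ) := fun α => Fin.snoc (w α) (b α) with hgen
  set b₀ : Fin (m + 1) → ℝ := Fin.snoc (0 : Fin m → ℝ) (-1) with hb₀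
  have hb₀C : b₀ ∉ coneSet S gen := by
    rintro ⟨lam, hlam, heq⟩
    have hcoord : ∀ j, b₀ j = ∑ α ∈ S, lam α * gen α j := by
      intro j
      rw [heq, Finset.sum_apply]
      exact Finset.sum_congr rfl fun α _ => rfl
    have hw0 : ∑ α ∈ S, lam α • w α = 0 := by
      funext i
      have hci := hcoord (Fin.castSucc i)
      simp only [hb₀, hgen, Fin.snoc_castSucc, Pi.zero_apply] at hci
      rw [Finset.sum_apply]
      simpa using hci.symm
    have hlast := hcoord (Fin.last m)
    simp only [hb₀, hgen, Fin.snoc_last] at hlast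
    have hge := h lam hlam hw0
    rw [← hlast] at hge
    linarith
  obtain ⟨f, u, hsep, hu⟩ :=
    geometric_hahn_banach_closed_point (convex_coneSet S gen) (isClosed_coneSet S gen) hb₀C
  have hu0 : 0 < u := by
    have h0 := hsep 0 (zero_mem_coneSet S gen)
    rwa [map_zero] at h0
  have hfC : ∀ x ∈ coneSet S gen, f x ≤ 0 := by
    intro x hx
    by_contra hpos
    push_neg at hpos
    have hr : 0 < (u + 1) / f x := div_pos (by linarith) hpos
    have hs := hsep _ (smul_mem_coneSet hx hr.le)
    rw [map_smul, smul_eq_mul, div_mul_cancel₀ _ (ne_of_gt hpos)] at hs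
    linarith
  set y : Fin (m + 1) → ℝ := fun j => f (fun k => if j = k then 1 else 0) with hy
  have hf : ∀ z : Fin (m + 1) → ℝ, f z = ∑ j, z j * y j := by
    intro z
    conv_lhs => rw [pi_eq_sum_univ z]
    rw [map_sum]
    exact Finset.sum_congr rfl fun j _ => by rw [map_smul, smul_eq_mul]
  set τ : ℝ := y (Fin.last m) with hτ
  have hτneg : τ < 0 := by
    have hb₀f : f b₀ = -τ := by
      rw [hf b₀, Fin.sum_univ_castSucc]
      simp [hb₀, hτ]
    have hfb : 0 < f b₀ := lt_trans hu0 hu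
    rw [hb₀f] at hfb
    linarith
  have hτpos : 0 < -τ := by linarith
  refine ⟨fun i => y (Fin.castSucc i) / (-τ), fun α hα => ?_⟩
  have hfg := hfC (gen α) (gen_mem_coneSet hα gen)
  rw [hf (gen α), Fin.sum_univ_castSucc] at hfg
  simp only [hgen, Fin.snoc_castSucc, Fin.snoc_last] at hfg
  calc (∑ i, (y (Fin.castSucc i) / (-τ)) * w α i)
      = (∑ i, w α i * y (Fin.castSucc i)) / (-τ) := by
        rw [Finset.sum_div]
        exact Finset.sum_congr rfl fun i _ => by ring
    _ ≤ b α := by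
        rw [div_le_iff₀ hτpos]
        nlinarith [hfg]

end Farkas

/-! ### Auxiliary lemmas -/

lemma rpow_finset_sum {ι : Type*} {x : ℝ} (hx : 0 < x) (s : Finset ι) (f : ι → ℝ) :
    x ^ (∑ i ∈ s, f i) = ∏ i ∈ s, x ^ f i := by
  rw [Real.rpow_def_of_pos hx, mul_comm, Finset.sum_mul, Real.exp_sum]
  exact Finset.prod_congr rfl fun i _ => by
    rw [Real.rpow_def_of_pos hx, mul_comm]

lemma sum_dot_eq {n : ℕ} (Ap : Finset (Fin n → ℝ)) (lam : (Fin n → ℝ) → ℝ) (β x : Fin n → ℝ)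
    (hβi : ∀ i, ∑ α ∈ Ap, lam α * α i = β i) :
    ∑ α ∈ Ap, (∑ j, x j * α j) * lam α = ∑ j, x j * β j := by
  calc ∑ α ∈ Ap, (∑ j, x j * α j) * lam α
      = ∑ α ∈ Ap, ∑ j, x j * (lam α * α j) := by
        refine Finset.sum_congr rfl fun α _ => ?_
        rw [Finset.sum_mul]
        exact Finset.sum_congr rfl fun j _ => by ring
    _ = ∑ j, ∑ α ∈ Ap, x j * (lam α * α j) := Finset.sum_comm
    _ = ∑ j, x j * β j := Finset.sum_congr rfl fun j _ => by rw [← Finset.mul_sum, hβi j]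

/-- Description of the dual cone of `C_{(A⁺,{β})}` via weighted geometric means
over barycentric coordinates. -/
theorem dual_single_beta_description {n : ℕ}
    (Ap : Finset (Fin n → ℝ)) (hAp : Ap.Nonempty)
    (β : Fin n → ℝ) (hβ : β ∉ Ap) :
    dualCone (Ap ∪ {β}) {c | InSAGE Ap {β} c}
      = {v | (∀ α ∈ Ap, 0 ≤ v α) ∧
          ∀ lam : (Fin n → ℝ) → ℝ, IsBary Ap β lam → v β ≤ ∏ α ∈ Ap, v α ^ lam α} := by
  classical
  have hdisj : Disjoint Ap ({β} : Finset (Fin n → ℝ)) :=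
    Finset.disjoint_singleton_right.mpr hβ
  have hsplit : ∀ u : (Fin n → ℝ) → ℝ,
      ∑ γ ∈ Ap ∪ {β}, u γ = (∑ γ ∈ Ap, u γ) + u β := by
    intro u
    rw [Finset.sum_union hdisj, Finset.sum_singleton]
  ext v
  simp only [dualCone, Set.mem_setOf_eq]
  constructor
  · -- dual ⊆ RHS
    intro hv
    have hpos : ∀ α ∈ Ap, 0 ≤ v α := by
      intro α hα
      have hαβ : α ≠ β := fun h => hβ (h ▸ hα)
      have hβα : ¬ β = α := fun h => hαβ h.symm
      set c : (Fin n → ℝ) → ℝ := fun γ => if γ = α then 1 else 0 with hc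
      have hcS : InSAGE Ap {β} c := by
        refine ⟨fun α' _ => by simp only [hc]; split <;> norm_num,
          fun β' hβ' => ?_, 1, fun _ => c, fun γ _ => by simp, ?_, ?_⟩
        · rw [Finset.mem_singleton] at hβ'
          rw [hβ']
          simp only [hc]
          rw [if_neg hβα]
        · intro i γ₁ _ γ₂ _ h1 _
          exfalso
          have hge : (0:ℝ) ≤ c γ₁ := by simp only [hc]; split <;> norm_num
          linarith
        · intro i x
          refine Finset.sum_nonneg fun γ _ => mul_nonneg ?_ (Real.exp_pos _).le
          simp only [hc]; split <;> norm_num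
      have hdual := hv c hcS
      rw [hsplit] at hdual
      have hcβ : c β = 0 := by simp only [hc]; rw [if_neg hβα]
      have hsum : ∑ γ ∈ Ap, v γ * c γ = v α := by
        simp only [hc, mul_ite, mul_one, mul_zero]
        rw [Finset.sum_ite_eq' Ap α (fun γ => v γ), if_pos hα]
      rw [hsum, hcβ, mul_zero, add_zero] at hdual
      exact hdual
    refine ⟨hpos, ?_⟩
    intro lam hbary
    obtain ⟨hl0, hl1, hlb⟩ := hbary
    have hβi : ∀ i, ∑ α ∈ Ap, lam α * α i = β i := by
      intro i
      have hci := congrFun hlb i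
      rw [Finset.sum_apply] at hci
      simpa using hci
    -- the master inequality obtained from AM/GM witnesses
    have master : ∀ s : (Fin n → ℝ) → ℝ, (∀ α ∈ Ap, 0 ≤ s α) →
        v β * ∏ α ∈ Ap, s α ^ lam α ≤ ∑ α ∈ Ap, v α * (lam α * s α) := by
      intro s hs
      set P : ℝ := ∏ α ∈ Ap, s α ^ lam α with hP
      have hP0 : 0 ≤ P := Finset.prod_nonneg fun α hα => Real.rpow_nonneg (hs α hα) _
      set c : (Fin n → ℝ) → ℝ := fun γ => if γ = β then -P else lam γ * s γ with hc
      have hcα : ∀ α ∈ Ap, c α = lam α * s α := by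
        intro α hα
        have hne : α ≠ β := fun h => hβ (h ▸ hα)
        simp [hc, hne]
      have hcβ : c β = -P := by simp [hc]
      have hcS : InSAGE Ap {β} c := by
        refine ⟨fun α hα => by rw [hcα α hα]; exact mul_nonneg (hl0 α hα) (hs α hα),
          fun β' hβ' => ?_, 1, fun _ => c, fun γ _ => by simp, ?_, ?_⟩
        · rw [Finset.mem_singleton] at hβ'
          rw [hβ', hcβ]
          linarith
        · intro i γ₁ hγ₁ γ₂ hγ₂ h1 h2
          have hone : ∀ γ ∈ Ap ∪ ({β} : Finset (Fin n → ℝ)), c γ < 0 → γ = β := by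
            intro γ hγ hcγ
            rcases Finset.mem_union.mp hγ with hγA | hγB
            · rw [hcα γ hγA] at hcγ
              exact absurd hcγ (not_lt.mpr (mul_nonneg (hl0 γ hγA) (hs γ hγA)))
            · exact Finset.mem_singleton.mp hγB
          rw [hone γ₁ hγ₁ h1, hone γ₂ hγ₂ h2]
        · intro i x
          have hgm := Real.geom_mean_le_arith_mean_weighted Ap lam
            (fun α => s α * Real.exp (∑ j, x j * α j)) hl0 hl1
            (fun α hα => mul_nonneg (hs α hα) (Real.exp_pos _).le)
          have hprod : ∏ α ∈ Ap, (s α * Real.exp (∑ j, x j * α j)) ^ lam α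
              = P * Real.exp (∑ j, x j * β j) := by
            have hfac : ∀ α ∈ Ap, (s α * Real.exp (∑ j, x j * α j)) ^ lam α
                = s α ^ lam α * Real.exp ((∑ j, x j * α j) * lam α) := by
              intro α hα
              rw [Real.mul_rpow (hs α hα) (Real.exp_pos _).le]
              congr 1
              rw [Real.rpow_def_of_pos (Real.exp_pos _), Real.log_exp]
            rw [Finset.prod_congr rfl hfac, Finset.prod_mul_distrib, ← Real.exp_sum, ← hP]
            exact congrArg (fun z => P * Real.exp z) (sum_dot_eq Ap lam β x hβi)
          have hexp : expSum (Ap ∪ {β}) c x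
              = (∑ α ∈ Ap, lam α * (s α * Real.exp (∑ j, x j * α j)))
                - P * Real.exp (∑ j, x j * β j) := by
            unfold expSum
            rw [hsplit (fun γ => c γ * Real.exp (∑ j, x j * γ j)), hcβ]
            have hcongr : ∀ α ∈ Ap, c α * Real.exp (∑ j, x j * α j)
                = lam α * (s α * Real.exp (∑ j, x j * α j)) := by
              intro α hα
              rw [hcα α hα]
              ring
            rw [Finset.sum_congr rfl hcongr]
            ring
          rw [hexp]
          rw [hprod] at hgm
          linarith
      have hfin := hv c hcS
      rw [hsplit] at hfin
      have hcongr : ∑ γ ∈ Ap, v γ * c γ = ∑ γ ∈ Ap, v γ * (lam γ * s γ) :=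
        Finset.sum_congr rfl fun γ hγ => by rw [hcα γ hγ]
      rw [hcongr, hcβ] at hfin
      linarith
    have hlamzero : (∀ α ∈ Ap, 0 < lam α → 0 < v α) →
        ∀ α ∈ Ap, v α = 0 → lam α = 0 := by
      intro hcase α hα hv0
      by_contra hne
      have hl := hcase α hα (lt_of_le_of_ne (hl0 α hα) (Ne.symm hne))
      rw [hv0] at hl
      exact lt_irrefl _ hl
    by_cases hcase : ∀ α ∈ Ap, 0 < lam α → 0 < v α
    · -- nondegenerate case
      set P : ℝ := ∏ α ∈ Ap, v α ^ lam α with hP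
      have hfac : ∀ α ∈ Ap, 0 < v α ^ lam α := by
        intro α hα
        rcases lt_or_eq_of_le (hpos α hα) with hv0 | hv0
        · exact Real.rpow_pos_of_pos hv0 _
        · rw [hlamzero hcase α hα hv0.symm, Real.rpow_zero]
          norm_num
      have hPpos : 0 < P := Finset.prod_pos hfac
      set s : (Fin n → ℝ) → ℝ := fun α => if v α = 0 then 1 else P / v α with hs
      have hs0 : ∀ α ∈ Ap, 0 ≤ s α := by
        intro α hα
        simp only [hs]
        split
        · norm_num
        · exact div_nonneg hPpos.le (hpos α hα)
      have hsprod : ∏ α ∈ Ap, s α ^ lam α = 1 := by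
        have hcongr : ∀ α ∈ Ap, s α ^ lam α = P ^ lam α / v α ^ lam α := by
          intro α hα
          by_cases hv0 : v α = 0
          · simp [hs, hv0, hlamzero hcase α hα hv0]
          · simp only [hs, if_neg hv0]
            exact Real.div_rpow hPpos.le (hpos α hα) _
        rw [Finset.prod_congr rfl hcongr, Finset.prod_div_distrib, ← rpow_finset_sum hPpos,
          hl1, Real.rpow_one]
        exact div_self (ne_of_gt hPpos)
      have hssum : ∑ α ∈ Ap, v α * (lam α * s α) = P := by
        have hcongr : ∀ α ∈ Ap, v α * (lam α * s α) = lam α * P := by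
          intro α hα
          by_cases hv0 : v α = 0
          · simp [hv0, hlamzero hcase α hα hv0]
          · simp only [hs, if_neg hv0]
            field_simp
        rw [Finset.sum_congr rfl hcongr, ← Finset.sum_mul, hl1, one_mul]
      have hm := master s hs0
      rw [hsprod, hssum, mul_one] at hm
      exact hm
    · -- degenerate case: v β ≤ 0
      push_neg at hcase
      obtain ⟨α₀, hα₀, hlampos, hvle⟩ := hcase
      have hv0 : v α₀ = 0 := le_antisymm hvle (hpos α₀ hα₀)
      have hProd0 : 0 ≤ ∏ α ∈ Ap, v α ^ lam α :=
        Finset.prod_nonneg fun α hα => Real.rpow_nonneg (hpos α hα) _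
      set Csum : ℝ := ∑ α ∈ Ap.erase α₀, lam α * v α with hCsum
      have hC0 : 0 ≤ Csum := Finset.sum_nonneg fun α hα =>
        mul_nonneg (hl0 α (Finset.mem_of_mem_erase hα)) (hpos α (Finset.mem_of_mem_erase hα))
      have hkey : ∀ r : ℝ, 0 < r → v β ≤ r * Csum := by
        intro r hr
        set e : ℝ := -(1 - lam α₀) / lam α₀ with he
        set s : (Fin n → ℝ) → ℝ := fun α => if α = α₀ then r ^ e else r with hs
        have hs0 : ∀ α ∈ Ap, 0 ≤ s α := by
          intro α _
          simp only [hs]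
          split
          · exact Real.rpow_nonneg hr.le _
          · exact hr.le
        have hsprod : ∏ α ∈ Ap, s α ^ lam α = 1 := by
          rw [← Finset.mul_prod_erase Ap _ hα₀]
          have h1 : s α₀ ^ lam α₀ = r ^ (-(1 - lam α₀)) := by
            simp only [hs, if_pos rfl]
            rw [← Real.rpow_mul hr.le]
            congr 1
            field_simp [he]
            rw [he, div_mul_cancel₀ _ hlampos.ne']
          have h2 : ∏ α ∈ Ap.erase α₀, s α ^ lam α = r ^ (1 - lam α₀) := by
            have hcongr : ∀ α ∈ Ap.erase α₀, s α ^ lam α = r ^ lam α := by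
              intro α hα
              simp only [hs, if_neg (Finset.ne_of_mem_erase hα)]
            rw [Finset.prod_congr rfl hcongr, ← rpow_finset_sum hr]
            congr 1
            have hats := Finset.add_sum_erase Ap lam hα₀
            linarith
          rw [h1, h2, ← Real.rpow_add hr]
          norm_num
        have hssum : ∑ α ∈ Ap, v α * (lam α * s α) = r * Csum := by
          rw [← Finset.add_sum_erase Ap _ hα₀]
          have hterm : v α₀ * (lam α₀ * s α₀) = 0 := by rw [hv0]; ring
          rw [hterm, zero_add, hCsum, Finset.mul_sum]
          exact Finset.sum_congr rfl fun α hα => by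
            simp only [hs, if_neg (Finset.ne_of_mem_erase hα)]
            ring
        have hm := master s hs0
        rw [hsprod, hssum, mul_one] at hm
        exact hm
      have hvβ : v β ≤ 0 := by
        by_contra hvb
        push_neg at hvb
        set r : ℝ := v β / (2 * (Csum + 1)) with hrdef
        have hrpos : 0 < r := by
          apply div_pos hvb
          linarith
        have hm := hkey r hrpos
        have hid : r * (2 * (Csum + 1)) = v β := by
          rw [hrdef]
          field_simp
        nlinarith [mul_pos hrpos (show (0:ℝ) < Csum + 2 by linarith)]
      linarith
  · -- RHS ⊆ dual
    rintro ⟨hv1, hv2⟩ c hcmem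
    obtain ⟨hc1, hc2, mm, d, hdec, hneg, hposS⟩ := hcmem
    have hcβ : c β ≤ 0 := hc2 β (Finset.mem_singleton_self β)
    have hcx : ∀ x, 0 ≤ expSum (Ap ∪ {β}) c x := by
      intro x
      have hrw : expSum (Ap ∪ {β}) c x = ∑ i, expSum (Ap ∪ {β}) (d i) x := by
        unfold expSum
        rw [Finset.sum_congr rfl (fun γ hγ => by rw [hdec γ hγ, Finset.sum_mul])]
        exact Finset.sum_comm
      rw [hrw]
      exact Finset.sum_nonneg fun i _ => hposS i x
    rw [hsplit]
    rcases le_or_gt (v β) 0 with hvβ | hvβ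
    · have t1 : 0 ≤ ∑ γ ∈ Ap, v γ * c γ :=
        Finset.sum_nonneg fun γ hγ => mul_nonneg (hv1 γ hγ) (hc1 γ hγ)
      nlinarith [mul_nonneg (neg_nonneg.mpr hvβ) (neg_nonneg.mpr hcβ)]
    · set Sc : ℝ := ∑ γ ∈ Ap, c γ with hScdef
      have hSc : 0 ≤ Sc := Finset.sum_nonneg fun γ hγ => hc1 γ hγ
      have key : ∀ ε : ℝ, 0 < ε → 0 ≤ (∑ γ ∈ Ap, (v γ + ε) * c γ) + v β * c β := by
        intro ε hε
        have hvε : ∀ α ∈ Ap, 0 < v α + ε := fun α hα => by linarith [hv1 α hα]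
        have hfark : ∀ lamf : (Fin n → ℝ) → ℝ, (∀ i, 0 ≤ lamf i) →
            (∑ α ∈ Ap, lamf α • (α - β)) = 0 →
            0 ≤ ∑ α ∈ Ap, lamf α * (Real.log (v α + ε) - Real.log (v β)) := by
          intro lamf hlf hl0sum
          set ssum : ℝ := ∑ α ∈ Ap, lamf α with hssumdef
          rcases eq_or_lt_of_le (Finset.sum_nonneg fun α _ => hlf α : (0:ℝ) ≤ ssum) with hz | hz
          · have hall : ∀ α ∈ Ap, lamf α = 0 := by
              intro α hα
              exact (Finset.sum_eq_zero_iff_of_nonneg (fun α _ => hlf α)).mp hz.symm α hα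
            rw [Finset.sum_congr rfl fun α hα => by rw [hall α hα, zero_mul]]
            simp
          · set lam2 : (Fin n → ℝ) → ℝ := fun α => lamf α / ssum with hlam2
            have hsum1 : ∑ α ∈ Ap, lamf α • α = ssum • β := by
              have hsub : ∑ α ∈ Ap, (lamf α • α - lamf α • β) = 0 := by
                rw [← hl0sum]
                exact Finset.sum_congr rfl fun α _ => (smul_sub (lamf α) α β).symm
              rw [Finset.sum_sub_distrib, ← Finset.sum_smul] at hsub
              rw [sub_eq_zero] at hsub
              exact hsub
            have hb2 : IsBary Ap β lam2 := by
              refine ⟨fun α _ => div_nonneg (hlf α) hz.le, ?_, ?_⟩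
              · simp only [hlam2]
                rw [← Finset.sum_div, ← hssumdef, div_self (ne_of_gt hz)]
              · have hcongr : ∀ α ∈ Ap, lam2 α • α = ssum⁻¹ • (lamf α • α) := by
                  intro α _
                  show (lamf α / ssum) • α = ssum⁻¹ • (lamf α • α)
                  rw [smul_smul, div_eq_inv_mul]
                rw [Finset.sum_congr rfl hcongr, ← Finset.smul_sum, hsum1, smul_smul,
                  inv_mul_cancel₀ (ne_of_gt hz), one_smul]
            have hvproof := hv2 lam2 hb2
            have hvprod : v β ≤ ∏ α ∈ Ap, (v α + ε) ^ lam2 α := by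
              refine le_trans hvproof (Finset.prod_le_prod ?_ ?_)
              · intro α hα
                exact Real.rpow_nonneg (hv1 α hα) _
              · intro α hα
                exact Real.rpow_le_rpow (hv1 α hα) (by linarith) (div_nonneg (hlf α) hz.le)
            have hlog : Real.log (v β) ≤ ∑ α ∈ Ap, lam2 α * Real.log (v α + ε) := by
              have hll := Real.log_le_log hvβ hvprod
              rw [Real.log_prod
                (fun α hα => ne_of_gt (Real.rpow_pos_of_pos (hvε α hα) _))] at hll
              rw [Finset.sum_congr rfl
                (fun α hα => Real.log_rpow (hvε α hα) (lam2 α))] at hll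
              exact hll
            have hlf2 : ∀ α, lamf α = ssum * lam2 α := by
              intro α
              rw [hlam2]
              field_simp
              exact (mul_div_cancel_right₀ _ (ne_of_gt hz : ssum ≠ 0)).symm
            have e1 : ∑ α ∈ Ap, lamf α * Real.log (v α + ε)
                = ssum * ∑ α ∈ Ap, lam2 α * Real.log (v α + ε) := by
              rw [Finset.mul_sum]
              exact Finset.sum_congr rfl fun α _ => by rw [hlf2 α]; ring
            have e2 : ∑ α ∈ Ap, lamf α * Real.log (v β) = ssum * Real.log (v β) := by
              rw [← Finset.sum_mul]
            have hexpand : ∑ α ∈ Ap, lamf α * (Real.log (v α + ε) - Real.log (v β))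
                = (∑ α ∈ Ap, lamf α * Real.log (v α + ε))
                  - ∑ α ∈ Ap, lamf α * Real.log (v β) := by
              rw [← Finset.sum_sub_distrib]
              exact Finset.sum_congr rfl fun α _ => by ring
            rw [hexpand, e1, e2]
            nlinarith [mul_le_mul_of_nonneg_left hlog hz.le]
        obtain ⟨t, htle⟩ := farkas Ap (fun α => α - β)
          (fun α => Real.log (v α + ε) - Real.log (v β)) hfark
        have hcoef : ∀ α ∈ Ap,
            v β * Real.exp ((∑ j, t j * α j) - (∑ j, t j * β j)) ≤ v α + ε := by
          intro α hα
          have hd := htle α hα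
          have hdd : ∑ i, t i * (α - β) i = (∑ j, t j * α j) - (∑ j, t j * β j) := by
            rw [← Finset.sum_sub_distrib]
            exact Finset.sum_congr rfl fun i _ => by
              simp only [Pi.sub_apply]
              ring
          rw [hdd] at hd
          calc v β * Real.exp ((∑ j, t j * α j) - (∑ j, t j * β j))
              ≤ v β * Real.exp (Real.log (v α + ε) - Real.log (v β)) :=
                mul_le_mul_of_nonneg_left (Real.exp_le_exp.mpr hd) hvβ.le
            _ = v α + ε := by
                rw [Real.exp_sub, Real.exp_log (hvε α hα), Real.exp_log hvβ]
                field_simp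
        have hchain : v β * Real.exp (-(∑ j, t j * β j)) * expSum (Ap ∪ {β}) c t
            = (∑ γ ∈ Ap, (v β * Real.exp ((∑ j, t j * γ j) - (∑ j, t j * β j))) * c γ)
              + v β * c β := by
          unfold expSum
          rw [Finset.mul_sum, hsplit (fun γ => v β * Real.exp (-(∑ j, t j * β j))
            * (c γ * Real.exp (∑ j, t j * γ j)))]
          congr 1
          · refine Finset.sum_congr rfl fun γ hγ => ?_
            rw [Real.exp_sub, Real.exp_neg, div_eq_mul_inv]
            ring
          · rw [Real.exp_neg]
            field_simp
        have hstep : (∑ γ ∈ Ap, (v β * Real.exp ((∑ j, t j * γ j) - (∑ j, t j * β j))) * c γ)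
            ≤ ∑ γ ∈ Ap, (v γ + ε) * c γ := by
          refine Finset.sum_le_sum fun γ hγ => ?_
          exact mul_le_mul_of_nonneg_right (hcoef γ hγ) (hc1 γ hγ)
        have hnn : 0 ≤ v β * Real.exp (-(∑ j, t j * β j)) * expSum (Ap ∪ {β}) c t :=
          mul_nonneg (mul_nonneg hvβ.le (Real.exp_pos _).le) (hcx t)
        rw [hchain] at hnn
        linarith
      by_contra hcon
      push_neg at hcon
      set X : ℝ := (∑ γ ∈ Ap, v γ * c γ) + v β * c β with hXdef
      have hXneg : X < 0 := hcon
      have hεpos : 0 < -X / (Sc + 1) := div_pos (by linarith) (by linarith)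
      have hkk := key _ hεpos
      have hXrw : ∑ γ ∈ Ap, (v γ + -X / (Sc + 1)) * c γ
          = (∑ γ ∈ Ap, v γ * c γ) + (-X / (Sc + 1)) * Sc := by
        rw [hScdef, Finset.mul_sum, ← Finset.sum_add_distrib]
        exact Finset.sum_congr rfl fun γ _ => by ring
      rw [hXrw] at hkk
      have hid : (-X / (Sc + 1)) * (Sc + 1) = -X :=
        div_mul_cancel₀ _ (by linarith : Sc + 1 ≠ 0)
      nlinarith [hkk, hid, hSc, hXneg]
end
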